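/- arXiv:2206.03054 — 5 statements merged into one kernel-verified Lean document; each statement's English description precedes it below -/
import Mathlib

section
/- Let E be a finite-dimensional vector space, let d, d' be integers between 0 and dim E, and let V ⊆ E be a fixed subspace of dimension d. If the dimension of V ∩ W is the same for every subspace W ⊆ E of dimension d', then at least one of the following holds: d = 0, d = dim E, d' = 0, or d' = dim E. -/
open Module

/-- In a finite-dimensional space there is a submodule of any dimension `k ≤ finrank`. -/
lemma aux_exists_finrank_eq (M : Type*) [AddCommGroup M] [Module ℂ M]
    [FiniteDimensional ℂ M] {k : ℕ} (hk : k ≤ finrank ℂ M) :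
    ∃ W : Submodule ℂ M, finrank ℂ W = k := by
  obtain ⟨f, hf⟩ := exists_linearIndependent_of_le_finrank hk
  exact ⟨Submodule.span ℂ (Set.range f),
    (finrank_span_eq_card hf).trans (by simp)⟩

/-- There is a submodule of `V` of any dimension `k ≤ finrank V`. -/
lemma aux_exists_le_finrank_eq {E : Type*} [AddCommGroup E] [Module ℂ E]
    [FiniteDimensional ℂ E] (V : Submodule ℂ E) {k : ℕ} (hk : k ≤ finrank ℂ V) :
    ∃ U : Submodule ℂ E, U ≤ V ∧ finrank ℂ U = k := by
  obtain ⟨U, hU⟩ := aux_exists_finrank_eq V hk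
  exact ⟨U.map V.subtype, Submodule.map_subtype_le V U,
    (Submodule.finrank_map_subtype_eq V U).trans hU⟩

/-- There is a submodule containing `V` of any dimension `k` with
`finrank V ≤ k ≤ finrank E`. -/
lemma aux_exists_ge_finrank_eq {E : Type*} [AddCommGroup E] [Module ℂ E]
    [FiniteDimensional ℂ E] (V : Submodule ℂ E) {k : ℕ}
    (hVk : finrank ℂ V ≤ k) (hk : k ≤ finrank ℂ E) :
    ∃ W : Submodule ℂ E, V ≤ W ∧ finrank ℂ W = k := by
  obtain ⟨C, hC⟩ := Submodule.exists_isCompl V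
  have hsum : finrank ℂ V + finrank ℂ C = finrank ℂ E :=
    Submodule.finrank_add_eq_of_isCompl hC
  obtain ⟨U, hUC, hU⟩ := aux_exists_le_finrank_eq C
    (k := k - finrank ℂ V) (by omega)
  refine ⟨V ⊔ U, le_sup_left, ?_⟩
  have hdisj : V ⊓ U = ⊥ := by
    rw [← le_bot_iff, ← hC.inf_eq_bot]
    exact inf_le_inf_left V hUC
  have := Submodule.finrank_sup_add_finrank_inf_eq V U
  rw [hdisj] at this
  simp only [finrank_bot, add_zero] at this
  omega

/-- If `V ⊆ E` has dimension `d` and `dim (V ⊓ W)` is the same for every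
subspace `W` of dimension `d'`, then `d = 0`, `d = dim E`, `d' = 0` or
`d' = dim E`. -/
theorem stmt_1 (E : Type*) [AddCommGroup E] [Module ℂ E] [FiniteDimensional ℂ E]
    (d d' : ℕ) (hd' : d' ≤ finrank ℂ E)
    (V : Submodule ℂ E) (hV : finrank ℂ V = d)
    (hconst : ∃ c : ℕ, ∀ W : Submodule ℂ E, finrank ℂ W = d' →
      finrank ℂ ↥(V ⊓ W) = c) :
    d = 0 ∨ d = finrank ℂ E ∨ d' = 0 ∨ d' = finrank ℂ E := by
  set n := finrank ℂ E with hn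
  have hdn : d ≤ n := hV ▸ Submodule.finrank_le V
  obtain ⟨c, hc⟩ := hconst
  -- `c = min d d'`
  have hmin : c = min d d' := by
    rcases le_total d' d with h | h
    · obtain ⟨U, hUV, hU⟩ := aux_exists_le_finrank_eq V (k := d') (by omega)
      have := hc U hU
      rw [inf_eq_right.mpr hUV] at this
      omega
    · obtain ⟨W, hVW, hW⟩ := aux_exists_ge_finrank_eq V (k := d') (by omega) hd'
      have := hc W hW
      rw [inf_eq_left.mpr hVW] at this
      omega
  obtain ⟨C, hC⟩ := Submodule.exists_isCompl V
  have hsum : finrank ℂ V + finrank ℂ C = n := Submodule.finrank_add_eq_of_isCompl hC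
  rcases le_or_gt (d + d') n with h1 | h1
  · -- take `W ≤ C`, then `V ⊓ W = ⊥` so `c = 0`
    obtain ⟨W, hWC, hW⟩ := aux_exists_le_finrank_eq C (k := d') (by omega)
    have h0 := hc W hW
    have hdisj : V ⊓ W = ⊥ := by
      rw [← le_bot_iff, ← hC.inf_eq_bot]
      exact inf_le_inf_left V hWC
    rw [hdisj, finrank_bot] at h0
    omega
  · -- take `W ≥ C`, then `V ⊔ W = ⊤` so `c = d + d' - n`
    obtain ⟨W, hCW, hW⟩ := aux_exists_ge_finrank_eq C (k := d') (by omega) hd'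
    have h0 := hc W hW
    have htop : V ⊔ W = ⊤ := by
      rw [← top_le_iff, ← hC.sup_eq_top]
      exact sup_le_sup_left hCW V
    have := Submodule.finrank_sup_add_finrank_inf_eq V W
    rw [htop, finrank_top] at this
    omega
end

section
/- Let q ≥ 1, let E₁, …, E_q and F be finite-dimensional vector spaces, let αᵢ : Eᵢ → F be linear maps, and let dᵢ be integers with 0 ≤ dᵢ ≤ dim Eᵢ. Let V ⊆ F be a fixed subspace. Then the set of dimensions of the subspaces (Σᵢ αᵢ(Uᵢ)) ∩ V, as each Uᵢ ranges over the dᵢ-dimensional subspaces of Eᵢ, is an interval of integers (i.e., if it contains a and b with a ≤ c ≤ b, then it contains c). -/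
open Module

section aux
variable {K M : Type*} [Field K] [AddCommGroup M] [Module K M] [FiniteDimensional K M]

lemma aux_sup_span (W : Submodule K M) {v : M} (hv : v ∉ W) :
    finrank K ↥(W ⊔ K ∙ v) = finrank K W + 1 := by
  have hv0 : v ≠ 0 := fun h => hv (h ▸ W.zero_mem)
  have hdisj : W ⊓ (K ∙ v) = ⊥ := by
    rw [eq_bot_iff]
    intro x hx
    obtain ⟨hxW, hxv⟩ := Submodule.mem_inf.mp hx
    obtain ⟨c, rfl⟩ := Submodule.mem_span_singleton.mp hxv
    rcases eq_or_ne c 0 with rfl | hc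
    · simp
    · exact absurd (by simpa [smul_smul, inv_mul_cancel₀ hc] using W.smul_mem c⁻¹ hxW) hv
  have h := Submodule.finrank_sup_add_finrank_inf_eq W (K ∙ v)
  rw [hdisj, finrank_bot, finrank_span_singleton hv0] at h
  omega

lemma aux_between : ∀ n (W U : Submodule K M), finrank K U - finrank K W = n →
    W ≤ U → finrank K W < finrank K U →
    ∃ H, W ≤ H ∧ H ≤ U ∧ finrank K H + 1 = finrank K U := by
  intro n
  induction n with
  | zero => intro W U h _ hlt; omega
  | succ n ih =>
    intro W U hn hWU hlt
    rcases eq_or_ne (finrank K W + 1) (finrank K U) with h | h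
    · exact ⟨W, le_rfl, hWU, h⟩
    · have hne : W ≠ U := fun h' => by rw [h'] at hlt; omega
      obtain ⟨v, hvU, hvW⟩ := SetLike.exists_of_lt (lt_of_le_of_ne hWU hne)
      have hsup : finrank K ↥(W ⊔ K ∙ v) = finrank K W + 1 := aux_sup_span W hvW
      have hle : W ⊔ (K ∙ v) ≤ U := sup_le hWU ((Submodule.span_singleton_le_iff_mem v U).mpr hvU)
      obtain ⟨H, h1, h2, h3⟩ := ih (W ⊔ K ∙ v) U (by omega) hle (by omega)
      exact ⟨H, le_trans le_sup_left h1, h2, h3⟩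

lemma aux_inf_growth (S T V : Submodule K M) (h : T ≤ S) :
    finrank K ↥(S ⊓ V) + finrank K T ≤ finrank K S + finrank K ↥(T ⊓ V) := by
  have e := Submodule.finrank_sup_add_finrank_inf_eq (S ⊓ V) T
  have h1 : (S ⊓ V) ⊓ T = T ⊓ V := by
    rw [inf_comm S V, inf_assoc, inf_eq_right.mpr h, inf_comm]
  have h2 : (S ⊓ V) ⊔ T ≤ S := sup_le inf_le_left h
  have h3 := Submodule.finrank_mono h2
  rw [h1] at e
  omega

end aux

section step
variable {q : ℕ} {E : Fin q → Type*} {F : Type*}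
  [∀ i, AddCommGroup (E i)] [∀ i, Module ℂ (E i)] [∀ i, FiniteDimensional ℂ (E i)]
  [AddCommGroup F] [Module ℂ F] [FiniteDimensional ℂ F]
  (α : ∀ i, E i →ₗ[ℂ] F) (V : Submodule ℂ F)

lemma aux_onestep (U : ∀ i, Submodule ℂ (E i)) (i : Fin q) (M : Submodule ℂ (E i))
    (hM : M ≤ U i) (hMd : finrank ℂ M + 1 = finrank ℂ (U i)) :
    finrank ℂ ↥((⨆ j, ((Function.update U i M) j).map (α j)) ⊓ V)
      ≤ finrank ℂ ↥((⨆ j, (U j).map (α j)) ⊓ V) ∧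
    finrank ℂ ↥((⨆ j, (U j).map (α j)) ⊓ V)
      ≤ finrank ℂ ↥((⨆ j, ((Function.update U i M) j).map (α j)) ⊓ V) + 1 := by
  set T := ⨆ j, ((Function.update U i M) j).map (α j) with hT
  set S := ⨆ j, (U j).map (α j) with hS
  have hupd_le : ∀ j, (Function.update U i M) j ≤ U j := by
    intro j
    rcases eq_or_ne j i with rfl | hji
    · simpa using hM
    · rw [Function.update_of_ne hji]
  have hTS : T ≤ S := iSup_mono fun j => Submodule.map_mono (hupd_le j)
  -- pick v ∈ U i \ M
  have hne : M ≠ U i := fun h => by rw [h] at hMd; omega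
  obtain ⟨v, hvU, hvM⟩ := SetLike.exists_of_lt (lt_of_le_of_ne hM hne)
  have hveq : M ⊔ (ℂ ∙ v) = U i := by
    apply Submodule.eq_of_le_of_finrank_le
      (sup_le hM ((Submodule.span_singleton_le_iff_mem v (U i)).mpr hvU))
    rw [aux_sup_span M hvM]; omega
  have hSle : S ≤ T ⊔ (ℂ ∙ (α i v)) := by
    apply iSup_le
    intro j
    rcases eq_or_ne j i with rfl | hji
    · rw [← hveq, Submodule.map_sup, Submodule.map_span, Set.image_singleton]
      apply sup_le_sup _ le_rfl
      refine le_trans ?_ (le_iSup _ j)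
      rw [Function.update_self]
    · refine le_trans ?_ le_sup_left
      refine le_trans ?_ (le_iSup (fun j => ((Function.update U i M) j).map (α j)) j)
      rw [Function.update_of_ne hji]
  have hspanle : finrank ℂ ↥(ℂ ∙ (α i v)) ≤ 1 := by
    rcases eq_or_ne (α i v) 0 with h0 | h0
    · rw [h0, Submodule.span_zero_singleton, finrank_bot]; omega
    · rw [finrank_span_singleton h0]
  have hdim : finrank ℂ S ≤ finrank ℂ T + 1 := by
    have h1 := Submodule.finrank_mono hSle
    have h2 := Submodule.finrank_add_le_finrank_add_finrank T (ℂ ∙ (α i v))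
    omega
  constructor
  · exact Submodule.finrank_mono (inf_le_inf_right V hTS)
  · have := aux_inf_growth S T V hTS
    have hTdim := Submodule.finrank_mono hTS
    omega

end step

section main
variable {q : ℕ} {E : Fin q → Type*} {F : Type*}
  [∀ i, AddCommGroup (E i)] [∀ i, Module ℂ (E i)] [∀ i, FiniteDimensional ℂ (E i)]
  [AddCommGroup F] [Module ℂ F] [FiniteDimensional ℂ F]
  (α : ∀ i, E i →ₗ[ℂ] F) (V : Submodule ℂ F)

lemma aux_main : ∀ n : ℕ, ∀ U U' : (∀ i, Submodule ℂ (E i)),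
    (∀ i, finrank ℂ (U' i) = finrank ℂ (U i)) →
    (∑ i, (finrank ℂ (U i) - finrank ℂ ↥(U i ⊓ U' i))) = n →
    ∀ m : ℕ, finrank ℂ ↥((⨆ j, (U j).map (α j)) ⊓ V) ≤ m →
      m ≤ finrank ℂ ↥((⨆ j, (U' j).map (α j)) ⊓ V) →
    ∃ U'' : (∀ i, Submodule ℂ (E i)), (∀ i, finrank ℂ (U'' i) = finrank ℂ (U i)) ∧
      finrank ℂ ↥((⨆ j, (U'' j).map (α j)) ⊓ V) = m := by
  intro n
  induction n using Nat.strong_induction_on with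
  | _ n ih =>
    intro U U' hdims hsum m hUm hmU'
    rcases eq_or_lt_of_le hUm with heq | hlt
    · exact ⟨U, fun i => rfl, heq⟩
    -- find an index where U i ≠ U' i
    by_cases hall : ∀ i, finrank ℂ (U i) - finrank ℂ ↥(U i ⊓ U' i) = 0
    · -- then U = U', contradiction with hlt : f U < m ≤ f U'
      have hUU' : U = U' := by
        funext i
        have h1 : finrank ℂ ↥(U i ⊓ U' i) ≤ finrank ℂ (U i) :=
          Submodule.finrank_mono inf_le_left
        have h2 : U i ⊓ U' i = U i :=
          Submodule.eq_of_le_of_finrank_le inf_le_left (by have := hall i; omega)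
        have h3 : U i ≤ U' i := h2 ▸ inf_le_right
        exact Submodule.eq_of_le_of_finrank_le h3 (hdims i).le
      rw [hUU'] at hlt
      omega
    · push_neg at hall
      obtain ⟨i, hi⟩ := hall
      have hWlt : finrank ℂ ↥(U i ⊓ U' i) < finrank ℂ (U i) := by
        have := Submodule.finrank_mono (inf_le_left : U i ⊓ U' i ≤ U i)
        omega
      -- H : hyperplane of U i containing W
      obtain ⟨H, hWH, hHU, hHd⟩ := aux_between (finrank ℂ (U i) - finrank ℂ ↥(U i ⊓ U' i))
        (U i ⊓ U' i) (U i) rfl inf_le_left hWlt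
      -- b ∈ U' i \ U i
      have hnotle : ¬ U' i ≤ U i := by
        intro hle
        rw [inf_eq_right.mpr hle, hdims i] at hWlt
        omega
      obtain ⟨b, hbU', hbU⟩ := SetLike.not_le_iff_exists.mp hnotle
      have hbH : b ∉ H := fun h => hbU (hHU h)
      set A := H ⊔ (ℂ ∙ b) with hA
      have hAd : finrank ℂ ↥A = finrank ℂ (U i) := by
        rw [hA, aux_sup_span H hbH]; omega
      set U'' := Function.update U i A with hU''
      have hU''dims : ∀ j, finrank ℂ (U'' j) = finrank ℂ (U j) := by
        intro j
        rcases eq_or_ne j i with rfl | hji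
        · rw [hU'', Function.update_self]; exact hAd
        · rw [hU'', Function.update_of_ne hji]
      -- one-step comparisons via common hyperplane H
      have hHA : H ≤ U'' i := by rw [hU'', Function.update_self]; exact le_sup_left
      have hHAd : finrank ℂ H + 1 = finrank ℂ (U'' i) := by
        rw [hU'', Function.update_self, hAd]; exact hHd
      have step1 := aux_onestep α V U i H hHU hHd
      have step2 := aux_onestep α V U'' i H hHA hHAd
      have hupd : Function.update U'' i H = Function.update U i H := by
        rw [hU'', Function.update_idem]
      rw [hupd] at step2
      -- f U'' ≤ m
      have hfU'' : finrank ℂ ↥((⨆ j, (U'' j).map (α j)) ⊓ V) ≤ m := by omega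
      -- measure decreases
      have hterm : finrank ℂ (U'' i) - finrank ℂ ↥(U'' i ⊓ U' i)
          < finrank ℂ (U i) - finrank ℂ ↥(U i ⊓ U' i) := by
        have hW_b : b ∉ (U i ⊓ U' i : Submodule ℂ (E i)) := fun h => hbU h.1
        have hle : (U i ⊓ U' i) ⊔ (ℂ ∙ b) ≤ U'' i ⊓ U' i := by
          rw [hU'', Function.update_self]
          refine sup_le (le_inf (le_trans hWH le_sup_left) inf_le_right) ?_
          refine le_inf ?_ ((Submodule.span_singleton_le_iff_mem b (U' i)).mpr hbU')
          exact le_sup_right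
        have h1 := Submodule.finrank_mono hle
        rw [aux_sup_span _ hW_b] at h1
        rw [hU''dims i]
        omega
      have hsum' : (∑ j, (finrank ℂ (U'' j) - finrank ℂ ↥(U'' j ⊓ U' j))) < n := by
        rw [← hsum]
        apply Finset.sum_lt_sum
        · intro j _
          rcases eq_or_ne j i with rfl | hji
          · exact hterm.le
          · rw [hU'', Function.update_of_ne hji]
        · exact ⟨i, Finset.mem_univ i, hterm⟩
      obtain ⟨U₃, hU₃dims, hU₃⟩ := ih _ hsum' U'' U'
        (fun j => (hdims j).trans (hU''dims j).symm) rfl m hfU'' hmU'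
      exact ⟨U₃, fun j => (hU₃dims j).trans (hU''dims j), hU₃⟩

end main

/-- Given linear maps `αᵢ : Eᵢ → F` and integers `dᵢ ≤ dim Eᵢ`, and a fixed
subspace `V ⊆ F`, the set of dimensions of `(Σᵢ αᵢ(Uᵢ)) ⊓ V`, as each `Uᵢ`
ranges over the `dᵢ`-dimensional subspaces of `Eᵢ`, is an integer interval. -/
theorem stmt_3 (q : ℕ) (hq : 1 ≤ q) (E : Fin q → Type*) (F : Type*)
    [∀ i, AddCommGroup (E i)] [∀ i, Module ℂ (E i)] [∀ i, FiniteDimensional ℂ (E i)]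
    [AddCommGroup F] [Module ℂ F] [FiniteDimensional ℂ F]
    (α : ∀ i, E i →ₗ[ℂ] F) (d : Fin q → ℕ) (hd : ∀ i, d i ≤ finrank ℂ (E i))
    (V : Submodule ℂ F) :
    ∀ a b m : ℕ,
      a ∈ {m : ℕ | ∃ U : ∀ i, Submodule ℂ (E i), (∀ i, finrank ℂ (U i) = d i) ∧
            finrank ℂ ↥((⨆ i, (U i).map (α i)) ⊓ V) = m} →
      b ∈ {m : ℕ | ∃ U : ∀ i, Submodule ℂ (E i), (∀ i, finrank ℂ (U i) = d i) ∧
            finrank ℂ ↥((⨆ i, (U i).map (α i)) ⊓ V) = m} →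
      a ≤ m → m ≤ b →
      m ∈ {m : ℕ | ∃ U : ∀ i, Submodule ℂ (E i), (∀ i, finrank ℂ (U i) = d i) ∧
            finrank ℂ ↥((⨆ i, (U i).map (α i)) ⊓ V) = m} := by
  rintro a b m ⟨Ua, hUad, hUa⟩ ⟨Ub, hUbd, hUb⟩ ham hmb
  obtain ⟨U'', hU''dims, hU''⟩ := aux_main α V
    (∑ i, (finrank ℂ (Ua i) - finrank ℂ ↥(Ua i ⊓ Ub i))) Ua Ub
    (fun i => (hUbd i).trans (hUad i).symm) rfl m (hUa ▸ ham) (hUb ▸ hmb)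
  exact ⟨U'', fun i => (hU''dims i).trans (hUad i), hU''⟩
end

section
/- Let αᵢ : Eᵢ → F (1 ≤ i ≤ q) be linear maps between finite-dimensional vector spaces and dᵢ integers with 0 ≤ dᵢ ≤ dim Eᵢ. Let S be the sum of the images of those αᵢ with dᵢ = dim Eᵢ. Then dim(Σᵢ αᵢ(Uᵢ)) is the same for all choices of subspaces Uᵢ ⊆ Eᵢ with dim Uᵢ = dᵢ if and only if: for each i, either (i) dᵢ = 0, or (ii) dᵢ > 0 and Im αᵢ ⊆ S, or (iii) 0 < dᵢ < dim Eᵢ, αᵢ is injective and Im αᵢ ⊄ S; and moreover S together with the images Im αᵢ for i in case (iii) are in direct sum. -/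
open Module Submodule

namespace Stmt4Aux

variable {K : Type} [Field K] {V : Type} [AddCommGroup V] [Module K V]
variable {W : Type} [AddCommGroup W] [Module K W]



variable {K : Type} [Field K] {V : Type} [AddCommGroup V] [Module K V]
variable {W : Type} [AddCommGroup W] [Module K W]

lemma exists_finrank_eq' [FiniteDimensional K V] {k : ℕ} (hk : k ≤ finrank K V) :
    ∃ U : Submodule K V, finrank K U = k := by
  obtain ⟨s, hcard, hli⟩ := exists_finset_linearIndependent_of_le_finrank hk
  exact ⟨Submodule.span K s, by rw [finrank_span_finset_eq_card hli, hcard]⟩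

lemma exists_finrank_eq_le [FiniteDimensional K V] (H : Submodule K V) {k : ℕ}
    (hk : k ≤ finrank K H) : ∃ U ≤ H, finrank K U = k := by
  obtain ⟨U₀, hU₀⟩ := exists_finrank_eq' (V := H) hk
  exact ⟨U₀.map H.subtype, Submodule.map_subtype_le H U₀,
    by rw [Submodule.finrank_map_subtype_eq]; exact hU₀⟩

lemma finrank_sup_of_disjoint [FiniteDimensional K V] {s t : Submodule K V} (h : Disjoint s t) :
    finrank K ↥(s ⊔ t) = finrank K s + finrank K t := by
  have h2 := Submodule.finrank_sup_add_finrank_inf_eq s t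
  rw [h.eq_bot, finrank_bot] at h2
  omega

lemma exists_superspace [FiniteDimensional K V] (Wl : Submodule K V) {k : ℕ}
    (h1 : finrank K Wl ≤ k) (h2 : k ≤ finrank K V) :
    ∃ U : Submodule K V, Wl ≤ U ∧ finrank K U = k := by
  obtain ⟨Wc, hc⟩ := Wl.exists_isCompl
  have hdim : finrank K Wl + finrank K Wc = finrank K V := Submodule.finrank_add_eq_of_isCompl hc
  obtain ⟨X, hXle, hX⟩ := exists_finrank_eq_le Wc (k := k - finrank K Wl) (by omega)
  refine ⟨Wl ⊔ X, le_sup_left, ?_⟩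
  rw [finrank_sup_of_disjoint (hc.disjoint.mono_right hXle), hX]
  omega

lemma finrank_map_add_finrank_inf_ker [FiniteDimensional K V] (f : V →ₗ[K] W)
    (M : Submodule K V) :
    finrank K (M.map f) + finrank K ↥(M ⊓ LinearMap.ker f) = finrank K M := by
  have h1 : M.map f = LinearMap.range (f.domRestrict M) := (LinearMap.range_domRestrict M f).symm
  have h2 := LinearMap.finrank_range_add_finrank_ker (f.domRestrict M)
  have h3 : LinearMap.ker (f.domRestrict M) = Submodule.comap M.subtype (LinearMap.ker f) :=
    LinearMap.ker_domRestrict M f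
  have h4 : finrank K ↥(Submodule.comap M.subtype (LinearMap.ker f)) =
      finrank K ↥(M ⊓ LinearMap.ker f) := by
    rw [← Submodule.map_comap_subtype, Submodule.finrank_map_subtype_eq]
  rw [h1, ← h4, ← h3, h2]

lemma finrank_map_of_disjoint [FiniteDimensional K V] {f : V →ₗ[K] W} {M : Submodule K V}
    (h : Disjoint (LinearMap.ker f) M) : finrank K (M.map f) = finrank K M := by
  have h2 := finrank_map_add_finrank_inf_ker f M
  rw [inf_comm, h.eq_bot, finrank_bot] at h2
  omega

lemma finrank_span_singleton_le' (x : V) : finrank K ↥(K ∙ x) ≤ 1 := by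
  rcases eq_or_ne x 0 with rfl | hx
  · rw [Submodule.span_zero_singleton, finrank_bot]; omega
  · rw [finrank_span_singleton hx]

lemma exists_avoid [FiniteDimensional K V] (Kr : Submodule K V) {x₀ : V} (hx : x₀ ∉ Kr)
    {k : ℕ} (hk : k < finrank K V) :
    ∃ U : Submodule K V, finrank K U = k ∧ x₀ ∉ Kr ⊔ U := by
  set π := Kr.mkQ with hπ
  have hx0 : π x₀ ≠ 0 := by
    simpa [hπ, Submodule.Quotient.mk_eq_zero] using hx
  obtain ⟨C, hC⟩ := (K ∙ π x₀).exists_isCompl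
  set H := Submodule.comap π C with hH
  have hKrH : Kr ≤ H := by
    intro y hy
    simp only [hH, Submodule.mem_comap, hπ, Submodule.mkQ_apply]
    rw [(Submodule.Quotient.mk_eq_zero _).2 hy]
    exact C.zero_mem
  have hxH : x₀ ∉ H := by
    intro h
    have : π x₀ ∈ (K ∙ π x₀) ⊓ C := ⟨Submodule.mem_span_singleton_self _, h⟩
    rw [hC.inf_eq_bot] at this
    exact hx0 this
  have hsup : H ⊔ (K ∙ x₀) = ⊤ := by
    rw [eq_top_iff]
    intro y _
    have : π y ∈ (K ∙ π x₀) ⊔ C := by rw [hC.sup_eq_top]; trivial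
    obtain ⟨a, ha, c, hc, hac⟩ := Submodule.mem_sup.mp this
    obtain ⟨t, rfl⟩ := Submodule.mem_span_singleton.mp ha
    have hy : y - t • x₀ ∈ H := by
      simp only [hH, Submodule.mem_comap, map_sub, map_smul]
      have : π y = t • π x₀ + c := hac.symm
      rw [this]; simpa using hc
    have : y = (y - t • x₀) + t • x₀ := by abel
    rw [this]
    exact Submodule.add_mem_sup hy (Submodule.smul_mem _ t (Submodule.mem_span_singleton_self _))
  have hHr : finrank K V ≤ finrank K H + 1 := by
    have h1 : finrank K ↥(H ⊔ (K ∙ x₀)) ≤ finrank K H + finrank K ↥(K ∙ x₀) :=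
      Submodule.finrank_add_le_finrank_add_finrank _ _
    rw [hsup, finrank_top] at h1
    have := finrank_span_singleton_le' (K := K) x₀
    omega
  obtain ⟨U, hUH, hU⟩ := exists_finrank_eq_le H (k := k) (by omega)
  refine ⟨U, hU, fun h => hxH ?_⟩
  exact (sup_le hKrH hUH) h

lemma mem_of_all_sup_map [FiniteDimensional K V] (β : V →ₗ[K] W)
    (A : Submodule K W) {x : W} {k : ℕ} (hk : k < finrank K V)
    (h : ∀ U : Submodule K V, finrank K U = k → x ∈ A ⊔ U.map β) : x ∈ A := by
  by_contra hxA
  by_cases hxr : x ∈ A ⊔ LinearMap.range β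
  · obtain ⟨a, ha, y, hy, hxy⟩ := Submodule.mem_sup.mp hxr
    obtain ⟨v, rfl⟩ := hy
    have hv : v ∉ Submodule.comap β A := by
      intro hv
      exact hxA (by rw [← hxy]; exact A.add_mem ha hv)
    obtain ⟨U, hU, hnot⟩ := exists_avoid (Submodule.comap β A) hv hk
    obtain ⟨a', ha', b, hb, hab⟩ := Submodule.mem_sup.mp (h U hU)
    obtain ⟨u, hu, rfl⟩ := hb
    apply hnot
    have hvu : v - u ∈ Submodule.comap β A := by
      have : β (v - u) = a' - a := by
        rw [map_sub]
        have hbv : β v = x - a := by rw [← hxy]; abel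
        have hbu : β u = x - a' := by rw [← hab]; abel
        rw [hbv, hbu]; abel
      simp only [Submodule.mem_comap, this]
      exact A.sub_mem ha' ha
    have : v = (v - u) + u := by abel
    rw [this]
    exact Submodule.add_mem_sup hvu hu
  · obtain ⟨U, hU⟩ := exists_finrank_eq' (le_of_lt hk)
    exact hxr ((sup_le_sup_left LinearMap.map_le_range A) (h U hU))



lemma finrank_sup_map_add [FiniteDimensional K V] [FiniteDimensional K W] (f : V →ₗ[K] W)
    (T : Submodule K W) (M : Submodule K V) :
    finrank K ↥(T ⊔ M.map f) + finrank K ↥(M ⊓ Submodule.comap f T)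
      = finrank K T + finrank K M := by
  have h1 : M.map f ⊓ T = (M ⊓ Submodule.comap f T).map f := by
    apply le_antisymm
    · rintro y hy
      obtain ⟨hy1, hy2⟩ := Submodule.mem_inf.mp hy
      obtain ⟨v, hv, rfl⟩ := hy1
      exact ⟨v, Submodule.mem_inf.mpr ⟨hv, hy2⟩, rfl⟩
    · rintro y ⟨v, hv, rfl⟩
      obtain ⟨hv1, hv2⟩ := Submodule.mem_inf.mp hv
      exact Submodule.mem_inf.mpr ⟨⟨v, hv1, rfl⟩, hv2⟩
  have hker : LinearMap.ker f ≤ Submodule.comap f T :=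
    Submodule.comap_mono (bot_le : (⊥ : Submodule K W) ≤ T)
  have h5 : M ⊓ Submodule.comap f T ⊓ LinearMap.ker f = M ⊓ LinearMap.ker f := by
    rw [inf_assoc, inf_eq_right.mpr hker]
  have h2 := Submodule.finrank_sup_add_finrank_inf_eq T (M.map f)
  rw [inf_comm, h1] at h2
  have h3 := finrank_map_add_finrank_inf_ker f M
  have h4 := finrank_map_add_finrank_inf_ker f (M ⊓ Submodule.comap f T)
  rw [h5] at h4
  omega




lemma dichotomy [FiniteDimensional K V] [FiniteDimensional K W] (f : V →ₗ[K] W)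
    (T : Submodule K W) {k : ℕ} (h0 : 0 < k) (hkn : k < finrank K V)
    (hconst : ∀ U₁ U₂ : Submodule K V, finrank K U₁ = k → finrank K U₂ = k →
      finrank K ↥(T ⊔ U₁.map f) = finrank K ↥(T ⊔ U₂.map f)) :
    LinearMap.range f ≤ T ∨ (LinearMap.ker f = ⊥ ∧ LinearMap.range f ⊓ T = ⊥) := by
  set Wc := Submodule.comap f T with hWc
  by_cases hT : Wc = ⊤
  · left; rwa [LinearMap.range_le_iff_comap]
  by_cases hB : Wc = ⊥
  · right
    constructor
    · rw [eq_bot_iff, ← hB]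
      exact Submodule.comap_mono (bot_le : (⊥ : Submodule K W) ≤ T)
    · rw [eq_bot_iff]
      rintro y hy
      obtain ⟨⟨v, rfl⟩, hyT⟩ := Submodule.mem_inf.mp hy
      have : v ∈ Wc := hyT
      rw [hB, Submodule.mem_bot] at this
      simp [this]
  exfalso
  have hw0 : finrank K Wc ≠ 0 := fun h => hB (Submodule.finrank_eq_zero.mp h)
  have hwn : finrank K Wc < finrank K V := Submodule.finrank_lt hT
  set n := finrank K V with hn
  set w := finrank K Wc with hw
  -- U₁ : large intersection
  obtain ⟨U₁, hU₁c, r₁⟩ : ∃ U₁ : Submodule K V, finrank K U₁ = k ∧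
      finrank K ↥(U₁ ⊓ Wc) = min k w := by
    rcases le_total k w with h | h
    · obtain ⟨U₁, hle, he⟩ := exists_finrank_eq_le Wc (k := k) (by omega)
      exact ⟨U₁, he, by rw [inf_eq_left.mpr hle, he, min_eq_left h]⟩
    · obtain ⟨U₁, hle, he⟩ := exists_superspace Wc h (le_of_lt hkn)
      exact ⟨U₁, he, by rw [inf_eq_right.mpr hle, min_eq_right h]⟩
  -- U₂ : small intersection
  obtain ⟨U₂, hU₂c, r₂⟩ : ∃ U₂ : Submodule K V, finrank K U₂ = k ∧
      finrank K ↥(U₂ ⊓ Wc) = k - (n - w) := by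
    obtain ⟨Wc', hcpl⟩ := Wc.exists_isCompl
    have hW' : finrank K Wc' = n - w := by
      have := Submodule.finrank_add_eq_of_isCompl hcpl
      omega
    rcases le_or_gt k (n - w) with h | h
    · obtain ⟨U₂, hle, he⟩ := exists_finrank_eq_le Wc' (k := k) (by omega)
      refine ⟨U₂, he, ?_⟩
      have hb : U₂ ⊓ Wc = ⊥ := (hcpl.disjoint.symm.mono_left hle).eq_bot
      rw [hb, finrank_bot]
      omega
    · obtain ⟨X, hXle, hX⟩ := exists_finrank_eq_le Wc (k := k - (n - w)) (by omega)
      refine ⟨X ⊔ Wc', ?_, ?_⟩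
      · rw [finrank_sup_of_disjoint (hcpl.disjoint.mono_left hXle), hX, hW']
        omega
      · rw [sup_inf_assoc_of_le _ hXle, hcpl.disjoint.symm.eq_bot, sup_bot_eq, hX]
  have e₁ := finrank_sup_map_add f T U₁
  have e₂ := finrank_sup_map_add f T U₂
  rw [hU₁c, r₁] at e₁
  rw [hU₂c, r₂] at e₂
  have heq := hconst U₁ U₂ hU₁c hU₂c
  rcases le_total k w with h | h
  · rw [min_eq_left h] at e₁; omega
  · rw [min_eq_right h] at e₁; omega

lemma finrank_iSup_of_iSupIndep {ι : Type} [Fintype ι] [FiniteDimensional K V]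
    (f : ι → Submodule K V) (h : iSupIndep f) :
    finrank K ↥(⨆ i, f i) = ∑ i, finrank K ↥(f i) := by
  classical
  have key : ∀ s : Finset ι, finrank K ↥(⨆ i ∈ s, f i) = ∑ i ∈ s, finrank K ↥(f i) := by
    intro s
    induction s using Finset.induction with
    | empty => simp
    | @insert a s ha ih =>
      rw [Finset.iSup_insert, Finset.sum_insert ha, ← ih]
      have hdisj : Disjoint (f a) (⨆ i ∈ s, f i) := by
        refine (h a).mono_right ?_
        exact iSup₂_le fun i hi => le_iSup₂ (f := fun i (_ : i ≠ a) => f i) i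
          (ne_of_mem_of_not_mem hi ha)
      rw [finrank_sup_of_disjoint hdisj]
  have he : (⨆ i, f i) = ⨆ i ∈ Finset.univ, f i := by simp
  rw [he, key Finset.univ]

variable {q : ℕ} {E : Fin q → Type} {F' : Type}
  [∀ i, AddCommGroup (E i)] [∀ i, Module K (E i)] [AddCommGroup F'] [Module K F']

variable (α : ∀ i, E i →ₗ[K] F')

/-- sum over coordinates `≠ i` -/
noncomputable def TT (U : ∀ i, Submodule K (E i)) (i : Fin q) : Submodule K F' :=
  ⨆ l, ⨆ (_ : l ≠ i), (U l).map (α l)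

/-- sum over coordinates `∉ {i, j}` -/
noncomputable def AA (U : ∀ i, Submodule K (E i)) (i j : Fin q) : Submodule K F' :=
  ⨆ l, ⨆ (_ : l ≠ i ∧ l ≠ j), (U l).map (α l)

lemma le_TT {U : ∀ i, Submodule K (E i)} {i l : Fin q} (h : l ≠ i) :
    (U l).map (α l) ≤ TT α U i :=
  le_iSup_of_le l (le_iSup_of_le h le_rfl)

lemma le_AA {U : ∀ i, Submodule K (E i)} {i j l : Fin q} (h1 : l ≠ i) (h2 : l ≠ j) :
    (U l).map (α l) ≤ AA α U i j :=
  le_iSup_of_le l (le_iSup_of_le ⟨h1, h2⟩ le_rfl)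

lemma sig_decomp (U : ∀ i, Submodule K (E i)) (i : Fin q) :
    (⨆ l, (U l).map (α l)) = (U i).map (α i) ⊔ TT α U i := by
  apply le_antisymm
  · refine iSup_le fun l => ?_
    rcases eq_or_ne l i with rfl | h
    · exact le_sup_left
    · exact le_trans (le_TT α h) le_sup_right
  · exact sup_le (le_iSup (fun l => (U l).map (α l)) i)
      (iSup_le fun l => iSup_le fun _ => le_iSup (fun l => (U l).map (α l)) l)

lemma TT_decomp (U : ∀ i, Submodule K (E i)) {i j : Fin q} (hj : j ≠ i) :
    TT α U i = (U j).map (α j) ⊔ AA α U i j := by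
  apply le_antisymm
  · refine iSup_le fun l => iSup_le fun hl => ?_
    rcases eq_or_ne l j with rfl | h
    · exact le_sup_left
    · exact le_trans (le_AA α hl h) le_sup_right
  · exact sup_le (le_TT α hj) (iSup_le fun l => iSup_le fun hl => le_TT α hl.1)

lemma AA_symm (U : ∀ i, Submodule K (E i)) (i j : Fin q) : AA α U i j = AA α U j i := by
  exact le_antisymm (iSup_le fun l => iSup_le fun hl => le_AA α hl.2 hl.1)
    (iSup_le fun l => iSup_le fun hl => le_AA α hl.2 hl.1)

lemma TT_congr {U U' : ∀ i, Submodule K (E i)} {i : Fin q}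
    (h : ∀ l, l ≠ i → U' l = U l) : TT α U' i = TT α U i := by
  exact iSup_congr fun l => iSup_congr fun hl => by rw [h l hl]

lemma AA_congr {U U' : ∀ i, Submodule K (E i)} {i j : Fin q}
    (h : ∀ l, l ≠ i → l ≠ j → U' l = U l) : AA α U' i j = AA α U i j := by
  exact iSup_congr fun l => iSup_congr fun hl => by rw [h l hl.1 hl.2]

lemma TT_update (U : ∀ i, Submodule K (E i)) (i : Fin q) (V : Submodule K (E i)) :
    TT α (Function.update U i V) i = TT α U i :=
  TT_congr α fun l hl => Function.update_of_ne hl _ _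

lemma sig_update (U : ∀ i, Submodule K (E i)) (i : Fin q) (V : Submodule K (E i)) :
    (⨆ l, ((Function.update U i V) l).map (α l)) = V.map (α i) ⊔ TT α U i := by
  rw [sig_decomp α _ i, TT_update, Function.update_self]

lemma TT_update_ne (U : ∀ i, Submodule K (E i)) {i j : Fin q} (hj : j ≠ i)
    (V : Submodule K (E j)) :
    TT α (Function.update U j V) i = V.map (α j) ⊔ AA α U i j := by
  rw [TT_decomp α _ hj, Function.update_self,
    AA_congr α fun l _ hl => Function.update_of_ne hl _ _]

/-- extracting an "adjacent pair" for a property that changes value. -/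
lemma hamming {β : Fin q → Type} (Valid : ∀ j, β j → Prop) (P : (∀ j, β j) → Prop) :
    ∀ s : Finset (Fin q), ∀ C C' : ∀ j, β j, (∀ j, Valid j (C j)) → (∀ j, Valid j (C' j)) →
    (∀ j ∉ s, C j = C' j) → P C → ¬ P C' →
    ∃ (D : ∀ j, β j) (j : Fin q) (b : β j), (∀ l, Valid l (D l)) ∧ Valid j b ∧
      P D ∧ ¬ P (Function.update D j b) := by
  classical
  intro s
  induction s using Finset.induction with
  | empty =>
    intro C C' hC hC' hagree hP hP'
    exact absurd (funext fun j => hagree j (Finset.notMem_empty j) : C = C' ) (by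
      intro h; rw [h] at hP; exact hP' hP)
  | @insert a s ha ih =>
    intro C C' hC hC' hagree hP hP'
    set Cmid := Function.update C a (C' a) with hCmid
    have hCmidV : ∀ j, Valid j (Cmid j) := by
      intro j
      rcases eq_or_ne j a with rfl | h
      · rw [hCmid, Function.update_self]; exact hC' j
      · rw [hCmid, Function.update_of_ne h]; exact hC j
    by_cases hm : P Cmid
    · refine ih Cmid C' hCmidV hC' ?_ hm hP'
      intro j hj
      rcases eq_or_ne j a with rfl | h
      · rw [hCmid, Function.update_self]
      · rw [hCmid, Function.update_of_ne h]
        exact hagree j (by simp [hj, h])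
    · exact ⟨C, a, C' a, hC, hC' a, hP, hm⟩

end Stmt4Aux
section

variable {q : ℕ} {E : Fin q → Type} {F : Type}
  [∀ i, AddCommGroup (E i)] [∀ i, Module ℂ (E i)]
  [AddCommGroup F] [Module ℂ F]

/-- `S`: the sum of the images of those `αᵢ` with `dᵢ = dim Eᵢ`. -/
noncomputable def sumFullImages (α : ∀ i, E i →ₗ[ℂ] F) (d : Fin q → ℕ) : Submodule ℂ F :=
  ⨆ (i) (_ : d i = finrank ℂ (E i)), LinearMap.range (α i)

/-- Case (iii): `0 < dᵢ < dim Eᵢ`, `αᵢ` injective and `Im αᵢ ⊄ S`. -/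
def CaseIII (α : ∀ i, E i →ₗ[ℂ] F) (d : Fin q → ℕ) (i : Fin q) : Prop :=
  0 < d i ∧ d i < finrank ℂ (E i) ∧ Function.Injective (α i) ∧
    ¬ LinearMap.range (α i) ≤ sumFullImages α d

end

open Stmt4Aux in
/-- `dim (Σᵢ αᵢ(Uᵢ))` is independent of the choice of `dᵢ`-dimensional subspaces
`Uᵢ ⊆ Eᵢ` if and only if each `i` is in one of the cases (i) `dᵢ = 0`,
(ii) `dᵢ > 0` and `Im αᵢ ⊆ S`, (iii) `0 < dᵢ < dim Eᵢ`, `αᵢ` injective and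
`Im αᵢ ⊄ S`, and moreover `S` together with the images `Im αᵢ` for `i` in case
(iii) are in direct sum. -/
theorem stmt_4 (q : ℕ) (E : Fin q → Type) (F : Type)
    [∀ i, AddCommGroup (E i)] [∀ i, Module ℂ (E i)] [∀ i, FiniteDimensional ℂ (E i)]
    [AddCommGroup F] [Module ℂ F] [FiniteDimensional ℂ F]
    (α : ∀ i, E i →ₗ[ℂ] F) (d : Fin q → ℕ) (hd : ∀ i, d i ≤ finrank ℂ (E i)) :
    (∃ D : ℕ, ∀ U : ∀ i, Submodule ℂ (E i), (∀ i, finrank ℂ (U i) = d i) →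
        finrank ℂ ↥(⨆ i, (U i).map (α i)) = D) ↔
      ((∀ i, d i = 0 ∨
          (0 < d i ∧ LinearMap.range (α i) ≤ sumFullImages α d) ∨
          CaseIII α d i) ∧
        iSupIndep
          (fun o : Option {i : Fin q // CaseIII α d i} =>
            o.elim (sumFullImages α d) (fun i => LinearMap.range (α i.1)))) := by
  classical
  set S := sumFullImages α d with hSdef
  have hrange_le_S : ∀ i, d i = finrank ℂ (E i) → LinearMap.range (α i) ≤ S := fun i hi =>
    le_iSup_of_le i (le_iSup_of_le hi le_rfl)
  have hex : ∀ i, ∃ Ui : Submodule ℂ (E i), finrank ℂ Ui = d i := fun i =>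
    exists_finrank_eq' (hd i)
  choose U₀ hU₀ using hex
  have hfull : ∀ (U : ∀ i, Submodule ℂ (E i)), (∀ l, finrank ℂ (U l) = d l) →
      ∀ i, d i = finrank ℂ (E i) → U i = ⊤ := fun U hU i hi =>
    Submodule.eq_top_of_finrank_eq (by rw [hU i, hi])
  have hupd : ∀ (U : ∀ l, Submodule ℂ (E l)), (∀ l, finrank ℂ (U l) = d l) →
      ∀ (j : Fin q) (V : Submodule ℂ (E j)), finrank ℂ V = d j →
      ∀ l, finrank ℂ ((Function.update U j V) l) = d l := by
    intro U hU j V hV l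
    rcases eq_or_ne l j with rfl | h
    · rw [Function.update_self]; exact hV
    · rw [Function.update_of_ne h]; exact hU l
  have hS_le_TT : ∀ (U : ∀ l, Submodule ℂ (E l)), (∀ l, finrank ℂ (U l) = d l) →
      ∀ i, d i ≠ finrank ℂ (E i) → S ≤ TT α U i := by
    intro U hU i hne
    refine iSup₂_le fun l hl => ?_
    have hli : l ≠ i := fun h => hne (h ▸ hl)
    rw [← Submodule.map_top, ← hfull U hU l hl]
    exact le_TT α hli
  constructor
  · rintro ⟨D, hD⟩
    -- the dichotomy, applied to each coordinate of each valid tuple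
    have hdich : ∀ (U : ∀ l, Submodule ℂ (E l)), (∀ l, finrank ℂ (U l) = d l) →
        ∀ i, 0 < d i → d i < finrank ℂ (E i) →
        LinearMap.range (α i) ≤ TT α U i ∨
          (LinearMap.ker (α i) = ⊥ ∧ LinearMap.range (α i) ⊓ TT α U i = ⊥) := by
      intro U hU i h0 hn
      refine dichotomy (α i) (TT α U i) h0 hn ?_
      have key : ∀ V : Submodule ℂ (E i), finrank ℂ V = d i →
          finrank ℂ ↥(TT α U i ⊔ V.map (α i)) = D := by
        intro V hV
        have := hD (Function.update U i V) (hupd U hU i V hV)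
        rwa [sig_update, sup_comm] at this
      intro V₁ V₂ h1 h2
      rw [key V₁ h1, key V₂ h2]
    -- Claim D: a vector lying in all partial sums lies in S
    have claimD : ∀ (m : ℕ) (s : Finset (Fin q)) (x : F), s.card ≤ m →
        (∀ U : ∀ l, Submodule ℂ (E l), (∀ l, finrank ℂ (U l) = d l) →
          x ∈ ⨆ l ∈ s, (U l).map (α l)) → x ∈ S := by
      intro m
      induction m with
      | zero =>
        intro s x hcard hx
        have hse : s = ∅ := Finset.card_eq_zero.mp (Nat.le_zero.mp hcard)
        subst hse
        have := hx U₀ hU₀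
        simp only [Finset.notMem_empty, iSup_false, iSup_bot, Submodule.mem_bot] at this
        rw [this]
        exact S.zero_mem
      | succ m ih =>
        intro s x hcard hx
        by_cases hallfull : ∀ j ∈ s, d j = finrank ℂ (E j)
        · have hle : (⨆ l ∈ s, (U₀ l).map (α l)) ≤ S := by
            refine iSup₂_le fun l hl => ?_
            rw [hfull U₀ hU₀ l (hallfull l hl), Submodule.map_top]
            exact hrange_le_S l (hallfull l hl)
          exact hle (hx U₀ hU₀)
        · push_neg at hallfull
          obtain ⟨j, hjs, hjnf⟩ := hallfull
          have hjlt : d j < finrank ℂ (E j) := lt_of_le_of_ne (hd j) hjnf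
          refine ih (s.erase j) x ?_ ?_
          · have := Finset.card_erase_of_mem hjs
            omega
          intro U hU
          refine mem_of_all_sup_map (α j) (⨆ l ∈ s.erase j, (U l).map (α l)) hjlt ?_
          intro V hV
          have hxV := hx (Function.update U j V) (hupd U hU j V hV)
          have hsplit : (⨆ l ∈ s, ((Function.update U j V) l).map (α l)) =
              V.map (α j) ⊔ ⨆ l ∈ s.erase j, (U l).map (α l) := by
            conv_lhs => rw [← Finset.insert_erase hjs]
            rw [Finset.iSup_insert, Function.update_self]
            congr 1
            exact iSup_congr fun l => iSup_congr fun hl => by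
              rw [Function.update_of_ne (Finset.ne_of_mem_erase hl)]
          rw [hsplit, sup_comm] at hxV
          exact hxV
    -- the key per-index property
    have hP : ∀ i, 0 < d i → ¬ (LinearMap.range (α i) ≤ S) →
        (LinearMap.ker (α i) = ⊥ ∧ d i < finrank ℂ (E i) ∧
          ∀ U : ∀ l, Submodule ℂ (E l), (∀ l, finrank ℂ (U l) = d l) →
            LinearMap.range (α i) ⊓ TT α U i = ⊥) := by
      intro i h0 hns
      have hlt : d i < finrank ℂ (E i) :=
        lt_of_le_of_ne (hd i) (fun h => hns (hrange_le_S i h))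
      -- some choice avoids alternative 1
      have hno : ∃ U : ∀ l, Submodule ℂ (E l), (∀ l, finrank ℂ (U l) = d l) ∧
          ¬ LinearMap.range (α i) ≤ TT α U i := by
        by_contra hall
        push_neg at hall
        apply hns
        intro x hx
        refine claimD (Finset.univ.erase i).card (Finset.univ.erase i) x le_rfl ?_
        intro U hU
        have h1 : TT α U i = ⨆ l ∈ Finset.univ.erase i, (U l).map (α l) := by
          apply le_antisymm
          · refine iSup_le fun l => iSup_le fun hl => ?_
            exact le_iSup₂ (f := fun l (_ : l ∈ Finset.univ.erase i) => (U l).map (α l)) l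
              (Finset.mem_erase.mpr ⟨hl, Finset.mem_univ l⟩)
          · exact iSup₂_le fun l hl => le_TT α (Finset.ne_of_mem_erase hl)
        rw [← h1]
        exact hall U hU hx
      obtain ⟨Uno, hUnov, hUno⟩ := hno
      have hker2 := (hdich Uno hUnov i h0 hlt).resolve_left hUno
      refine ⟨hker2.1, hlt, ?_⟩
      intro U hU
      rcases hdich U hU i h0 hlt with hyes | hno2
      · exfalso
        obtain ⟨Dt, j, b, hDtv, hbv, hPD, hPnD⟩ :=
          hamming (fun j (Uj : Submodule ℂ (E j)) => finrank ℂ Uj = d j)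
            (fun C => LinearMap.range (α i) ≤ TT α C i) Finset.univ U Uno hU hUnov
            (fun j hj => absurd (Finset.mem_univ j) hj) hyes hUno
        rcases eq_or_ne j i with rfl | hji
        · rw [TT_update] at hPnD
          exact hPnD hPD
        -- the changed coordinate is a genuine one
        have hj0 : 0 < d j := by
          rcases Nat.eq_zero_or_pos (d j) with h00 | h; swap
          · exact h
          exfalso
          have hb : b = ⊥ := Submodule.finrank_eq_zero.mp (by rw [hbv, h00])
          have hDj : Dt j = ⊥ := Submodule.finrank_eq_zero.mp (by rw [hDtv j, h00])
          rw [hb, ← hDj, Function.update_eq_self] at hPnD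
          exact hPnD hPD
        have hjlt : d j < finrank ℂ (E j) := by
          rcases lt_or_eq_of_le (hd j) with h | hfj
          · exact h
          exfalso
          have hb : b = ⊤ := Submodule.eq_top_of_finrank_eq (by rw [hbv, hfj])
          have hDj : Dt j = ⊤ := hfull Dt hDtv j hfj
          rw [hb, ← hDj, Function.update_eq_self] at hPnD
          exact hPnD hPD
        set A := AA α Dt i j with hA
        have hyesD : LinearMap.range (α i) ≤ (Dt j).map (α j) ⊔ A := by
          rw [← TT_decomp α Dt hji]
          exact hPD
        have hdisj2 := ((hdich (Function.update Dt j b) (hupd Dt hDtv j b hbv) i h0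
          hlt).resolve_left hPnD).2
        have hA_le : A ≤ TT α (Function.update Dt j b) i := by
          rw [TT_update_ne α Dt hji b]
          exact le_sup_right
        have hdisjA : LinearMap.range (α i) ⊓ A = ⊥ :=
          eq_bot_iff.mpr (le_trans (inf_le_inf_left _ hA_le) hdisj2.le)
        have hne : LinearMap.range (α i) ≠ ⊥ := fun h => hns (h ▸ bot_le)
        obtain ⟨v, hv, hv0⟩ := (Submodule.ne_bot_iff _).mp hne
        have hvA : v ∉ A := fun h => hv0 (by
          have hm : v ∈ LinearMap.range (α i) ⊓ A := Submodule.mem_inf.mpr ⟨hv, h⟩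
          rw [hdisjA] at hm
          exact (Submodule.mem_bot _).mp hm)
        obtain ⟨wv, hwv, a, ha, hva⟩ := Submodule.mem_sup.mp (hyesD hv)
        have hwv0 : wv ≠ 0 := by
          rintro rfl
          rw [zero_add] at hva
          exact hvA (hva ▸ ha)
        obtain ⟨x₀, hx₀⟩ := hv
        obtain ⟨Ui, hUi_le, hUi_r⟩ := exists_superspace (K := ℂ) (ℂ ∙ x₀)
          (le_trans (finrank_span_singleton_le' x₀) h0) (hd i)
        have hvUi : v ∈ Ui.map (α i) := ⟨x₀, hUi_le (Submodule.mem_span_singleton_self x₀), hx₀⟩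
        -- dichotomy at coordinate j
        have hTTj : TT α (Function.update Dt i Ui) j = Ui.map (α i) ⊔ A := by
          rw [TT_update_ne α Dt (Ne.symm hji) Ui, hA, AA_symm]
        have hwvTT : wv ∈ TT α (Function.update Dt i Ui) j := by
          rw [hTTj]
          have : wv = v - a := by rw [← hva]; abel
          rw [this]
          exact Submodule.sub_mem _ (le_sup_left (α := Submodule ℂ F) hvUi)
            (le_sup_right (α := Submodule ℂ F) ha)
        have hj1 : LinearMap.range (α j) ≤ Ui.map (α i) ⊔ A := by
          rcases hdich (Function.update Dt i Ui) (hupd Dt hDtv i Ui hUi_r) j hj0 hjlt with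
            h | h
          · rwa [hTTj] at h
          · exfalso
            apply hwv0
            have hm : wv ∈ LinearMap.range (α j) ⊓ TT α (Function.update Dt i Ui) j :=
              Submodule.mem_inf.mpr ⟨LinearMap.map_le_range hwv, hwvTT⟩
            rw [h.2] at hm
            exact (Submodule.mem_bot _).mp hm
        -- pass to the quotient by A and count dimensions
        have hmapA : A.map A.mkQ = ⊥ := by
          rw [eq_bot_iff]
          rintro y ⟨a', ha', rfl⟩
          simp only [Submodule.mkQ_apply, Submodule.mem_bot, Submodule.Quotient.mk_eq_zero]
          exact ha'
        have hdisjker : Disjoint (LinearMap.ker A.mkQ) (LinearMap.range (α i)) := by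
          rw [Submodule.ker_mkQ, disjoint_iff, inf_comm]
          exact hdisjA
        have m1 : finrank ℂ ((LinearMap.range (α i)).map A.mkQ) = finrank ℂ (E i) := by
          rw [finrank_map_of_disjoint hdisjker]
          have h2 := LinearMap.finrank_range_add_finrank_ker (α i)
          rw [hker2.1, finrank_bot] at h2
          omega
        have c1 : (LinearMap.range (α i)).map A.mkQ ≤ ((Dt j).map (α j)).map A.mkQ := by
          refine le_trans (Submodule.map_mono hyesD) ?_
          rw [Submodule.map_sup, hmapA, sup_bot_eq]
        have c2 : ((Dt j).map (α j)).map A.mkQ ≤ (LinearMap.range (α j)).map A.mkQ :=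
          Submodule.map_mono LinearMap.map_le_range
        have c3 : (LinearMap.range (α j)).map A.mkQ ≤ (Ui.map (α i)).map A.mkQ := by
          refine le_trans (Submodule.map_mono hj1) ?_
          rw [Submodule.map_sup, hmapA, sup_bot_eq]
        have c4 : finrank ℂ ((Ui.map (α i)).map A.mkQ) ≤ d i := by
          refine le_trans (Submodule.finrank_map_le _ _) ?_
          refine le_trans (Submodule.finrank_map_le _ _) ?_
          rw [hUi_r]
        have := Submodule.finrank_mono (le_trans c1 (le_trans c2 c3))
        rw [m1] at this
        omega
      · exact hno2.2
    constructor
    · -- the case trichotomy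
      intro i
      by_cases h0 : d i = 0
      · exact Or.inl h0
      by_cases hle : LinearMap.range (α i) ≤ S
      · exact Or.inr (Or.inl ⟨Nat.pos_of_ne_zero h0, hle⟩)
      · obtain ⟨hker, hlt, _⟩ := hP i (Nat.pos_of_ne_zero h0) hle
        exact Or.inr (Or.inr ⟨Nat.pos_of_ne_zero h0, hlt, LinearMap.ker_eq_bot.mp hker, hle⟩)
    · -- independence
      intro o
      rw [Submodule.disjoint_def]
      intro x hx1 hx2
      rw [Submodule.mem_iSup_iff_exists_finsupp] at hx2
      obtain ⟨f, hf, hsum⟩ := hx2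
      have hfo : f o = 0 := by
        have hm := hf o
        rw [iSup_neg (fun h => h rfl)] at hm
        exact (Submodule.mem_bot _).mp hm
      have hterm : ∀ jj : {i : Fin q // CaseIII α d i}, some jj ≠ o →
          f (some jj) ∈ LinearMap.range (α jj.1) := by
        intro jj h
        have hm := hf (some jj)
        rwa [iSup_pos h] at hm
      have hcover : ∀ l : Fin q, ∃ Ul : Submodule ℂ (E l), finrank ℂ Ul = d l ∧
          ∀ h : CaseIII α d l, some (⟨l, h⟩ : {i : Fin q // CaseIII α d i}) ≠ o →
            f (some ⟨l, h⟩) ∈ Ul.map (α l) := by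
        intro l
        by_cases hc : CaseIII α d l
        · by_cases hne : some (⟨l, hc⟩ : {i : Fin q // CaseIII α d i}) ≠ o
          · obtain ⟨y, hy⟩ := hterm ⟨l, hc⟩ hne
            obtain ⟨Ul, hyle, hr⟩ := exists_superspace (K := ℂ) (ℂ ∙ y)
              (le_trans (finrank_span_singleton_le' y) hc.1) (hd l)
            refine ⟨Ul, hr, fun h' _ => ?_⟩
            have he : (⟨l, h'⟩ : {i : Fin q // CaseIII α d i}) = ⟨l, hc⟩ := rfl
            rw [he]
            exact ⟨y, hyle (Submodule.mem_span_singleton_self y), hy⟩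
          · push_neg at hne
            refine ⟨U₀ l, hU₀ l, fun h' hne' => absurd ?_ hne'⟩
            have he : (⟨l, h'⟩ : {i : Fin q // CaseIII α d i}) = ⟨l, hc⟩ := rfl
            rw [he, hne]
        · exact ⟨U₀ l, hU₀ l, fun h' => absurd h' hc⟩
      choose Uc hUcv hUcf using hcover
      have hstar : ∀ (j₀ : Fin q), CaseIII α d j₀ →
          LinearMap.range (α j₀) ⊓ TT α Uc j₀ = ⊥ := fun j₀ h =>
        (hP j₀ h.1 h.2.2.2).2.2 Uc hUcv
      rcases o with _ | ⟨i, hi⟩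
      · -- o = none : x ∈ S
        have hzero : ∀ jj : {i : Fin q // CaseIII α d i}, f (some jj) = 0 := by
          rintro ⟨j₀, hj₀⟩
          by_cases hmem : some (⟨j₀, hj₀⟩ : {i : Fin q // CaseIII α d i}) ∈ f.support
          swap
          · exact Finsupp.notMem_support_iff.mp hmem
          have hsplitsum : f (some ⟨j₀, hj₀⟩) +
              ∑ o' ∈ f.support.erase (some ⟨j₀, hj₀⟩), f o' = x := by
            rw [← hsum, Finsupp.sum, Finset.add_sum_erase _ _ hmem]
          have hxTT : x ∈ TT α Uc j₀ :=
            hS_le_TT Uc hUcv j₀ (Nat.ne_of_lt hj₀.2.1) hx1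
          have hsumTT : (∑ o' ∈ f.support.erase (some ⟨j₀, hj₀⟩), f o') ∈ TT α Uc j₀ := by
            refine Submodule.sum_mem _ fun o' ho' => ?_
            have hne := Finset.ne_of_mem_erase ho'
            rcases o' with _ | ⟨k, hk⟩
            · rw [hfo]
              exact Submodule.zero_mem _
            · have hk1 : k ≠ j₀ := by
                intro hkj
                subst hkj
                exact hne rfl
              exact le_TT α hk1 (hUcf k hk (Option.some_ne_none _))
          have hmem2 : f (some ⟨j₀, hj₀⟩) ∈ LinearMap.range (α j₀) ⊓ TT α Uc j₀ := by
            refine Submodule.mem_inf.mpr ⟨hterm ⟨j₀, hj₀⟩ (Option.some_ne_none _), ?_⟩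
            have he : f (some ⟨j₀, hj₀⟩) =
                x - ∑ o' ∈ f.support.erase (some ⟨j₀, hj₀⟩), f o' := by
              rw [← hsplitsum]; abel
            rw [he]
            exact Submodule.sub_mem _ hxTT hsumTT
          rw [hstar j₀ hj₀] at hmem2
          exact (Submodule.mem_bot _).mp hmem2
        rw [← hsum, Finsupp.sum]
        refine Finset.sum_eq_zero fun o' _ => ?_
        rcases o' with _ | jj
        · exact hfo
        · exact hzero jj
      · -- o = some ⟨i, hi⟩ : x ∈ range (α i)
        have hxTT : x ∈ TT α Uc i := by
          rw [← hsum, Finsupp.sum]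
          refine Submodule.sum_mem _ fun o' _ => ?_
          rcases o' with _ | ⟨k, hk⟩
          · refine hS_le_TT Uc hUcv i (Nat.ne_of_lt hi.2.1) ?_
            have hm := hf none
            rwa [iSup_pos (by simp)] at hm
          · by_cases heq : (some (⟨k, hk⟩ : {i : Fin q // CaseIII α d i}) : Option _) =
                some ⟨i, hi⟩
            · rw [heq, hfo]
              exact Submodule.zero_mem _
            · have hk1 : k ≠ i := by
                intro hki
                subst hki
                exact heq rfl
              exact le_TT α hk1 (hUcf k hk heq)
        have hmem2 : x ∈ LinearMap.range (α i) ⊓ TT α Uc i :=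
          Submodule.mem_inf.mpr ⟨hx1, hxTT⟩
        rw [hstar i hi] at hmem2
        exact (Submodule.mem_bot _).mp hmem2
  · rintro ⟨hcase, hind⟩
    haveI : DecidablePred (CaseIII α d) := Classical.decPred _
    refine ⟨finrank ℂ S + ∑ jj : {i : Fin q // CaseIII α d i}, d jj.1, ?_⟩
    intro U hU
    set g : Option {i : Fin q // CaseIII α d i} → Submodule ℂ F :=
      fun o => o.elim S (fun jj => (U jj.1).map (α jj.1)) with hg
    have hS_le_sig : S ≤ ⨆ l, (U l).map (α l) := by
      refine iSup₂_le fun l hl => ?_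
      rw [← Submodule.map_top, ← hfull U hU l hl]
      exact le_iSup (fun l => (U l).map (α l)) l
    have hsig : (⨆ l, (U l).map (α l)) = ⨆ o, g o := by
      rw [iSup_option]
      apply le_antisymm
      · refine iSup_le fun l => ?_
        rcases hcase l with h0 | ⟨hpos, hle⟩ | hIII
        · have hbot : U l = ⊥ := Submodule.finrank_eq_zero.mp (by rw [hU l, h0])
          rw [hbot, Submodule.map_bot]
          exact bot_le
        · exact le_sup_of_le_left (le_trans LinearMap.map_le_range hle)
        · exact le_sup_of_le_right
            (le_iSup (fun jj : {i : Fin q // CaseIII α d i} => g (some jj)) ⟨l, hIII⟩)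
      · exact sup_le hS_le_sig
          (iSup_le fun jj => le_iSup (fun l => (U l).map (α l)) jj.1)
    have hgle : g ≤ (fun o : Option {i : Fin q // CaseIII α d i} =>
        o.elim S (fun jj => LinearMap.range (α jj.1))) := by
      intro o
      rcases o with _ | jj
      · exact le_rfl
      · exact LinearMap.map_le_range
    have hindep : iSupIndep g := hind.mono hgle
    rw [hsig, finrank_iSup_of_iSupIndep g hindep, Fintype.sum_option]
    congr 1
    refine Finset.sum_congr rfl fun jj _ => ?_
    have hker : LinearMap.ker (α jj.1) = ⊥ := LinearMap.ker_eq_bot.mpr jj.2.2.2.1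
    have hmr : finrank ℂ ((U jj.1).map (α jj.1)) = finrank ℂ (U jj.1) :=
      finrank_map_of_disjoint (by rw [hker]; exact disjoint_bot_left)
    rw [show g (some jj) = (U jj.1).map (α jj.1) from rfl, hmr, hU jj.1]
end

section
/- Let V be an n-dimensional vector space and E a q-dimensional vector space with basis f₁, …, f_q. Let 0 < a < n. Suppose g ∈ GL(V ⊗ E), written as a q×q block matrix (g_{ij}) with g_{ij} ∈ End(V) relative to the decomposition V ⊗ E = ⊕ᵢ V ⊗ ℂfᵢ, has the property: for all subspaces U₁, …, U_q ⊆ V of dimension a, there exist subspaces V₁, …, V_q ⊆ V of dimension a with g·(U₁⊗ℂf₁ ⊕ ⋯ ⊕ U_q⊗ℂf_q) = V₁⊗ℂf₁ ⊕ ⋯ ⊕ V_q⊗ℂf_q. Then g is a monomial matrix: there is a permutation σ of {1,…,q} such that g_{ij} = 0 unless i = σ(j), and each g_{σ(j),j} ∈ GL(V). -/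
open Module

noncomputable def blockMap {V : Type} [AddCommGroup V] [Module ℂ V] {q : ℕ}
    (g : Fin q → Fin q → (V →ₗ[ℂ] V)) : (Fin q → V) →ₗ[ℂ] (Fin q → V) :=
  LinearMap.pi fun i => ∑ j, (g i j).comp (LinearMap.proj j)

section Aux

variable {V : Type} [AddCommGroup V] [Module ℂ V] [FiniteDimensional ℂ V]

lemma aux_exists_finrank (k : ℕ) (hk : k ≤ finrank ℂ V) :
    ∃ B : Submodule ℂ V, finrank ℂ B = k := by
  obtain ⟨f, hf⟩ := exists_linearIndependent_of_le_finrank hk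
  exact ⟨Submodule.span ℂ (Set.range f), by
    rw [finrank_span_eq_card hf, Fintype.card_fin]⟩

lemma aux_exists_finrank_le (R : Submodule ℂ V) (k : ℕ) (hk : k ≤ finrank ℂ R) :
    ∃ B : Submodule ℂ V, B ≤ R ∧ finrank ℂ B = k := by
  obtain ⟨B0, hB0⟩ := aux_exists_finrank (V := R) k hk
  exact ⟨B0.map R.subtype, Submodule.map_subtype_le R B0, by
    rw [Submodule.finrank_map_subtype_eq]; exact hB0⟩

lemma aux_extend (U0 : Submodule ℂ V) (aa : ℕ) (h1 : finrank ℂ U0 ≤ aa)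
    (h2 : aa ≤ finrank ℂ V) : ∃ U : Submodule ℂ V, U0 ≤ U ∧ finrank ℂ U = aa := by
  obtain ⟨W, hW⟩ := Submodule.exists_isCompl U0
  have hsum := Submodule.finrank_add_eq_of_isCompl hW
  obtain ⟨B, hBW, hB⟩ := aux_exists_finrank_le W (aa - finrank ℂ U0) (by omega)
  refine ⟨U0 ⊔ B, le_sup_left, ?_⟩
  have hinf : U0 ⊓ B = ⊥ := by
    rw [eq_bot_iff]
    refine le_trans (inf_le_inf_left U0 hBW) ?_
    rw [disjoint_iff.mp hW.disjoint]
  have hkey := Submodule.finrank_sup_add_finrank_inf_eq U0 B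
  rw [hinf, finrank_bot] at hkey
  omega

lemma aux_avoid (R : Submodule ℂ V) (s : V) (hs : s ≠ 0) (aa : ℕ)
    (h : aa + 1 ≤ finrank ℂ R) :
    ∃ B : Submodule ℂ V, B ≤ R ∧ finrank ℂ B = aa ∧ s ∉ B := by
  by_cases hsR : s ∈ R
  · set C : Submodule ℂ ↥R := Submodule.comap R.subtype (Submodule.span ℂ {s}) with hCdef
    obtain ⟨D, hD⟩ := Submodule.exists_isCompl C
    have hCle : finrank ℂ C ≤ 1 := by
      have hmap : C.map R.subtype ≤ Submodule.span ℂ {s} := by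
        rintro x ⟨y, hy, rfl⟩
        exact hy
      calc finrank ℂ C = finrank ℂ (C.map R.subtype) :=
            (Submodule.finrank_map_subtype_eq R C).symm
        _ ≤ finrank ℂ (Submodule.span ℂ {s}) := Submodule.finrank_mono hmap
        _ ≤ 1 := by rw [finrank_span_singleton hs]
    have hsumCD := Submodule.finrank_add_eq_of_isCompl hD
    obtain ⟨B', hB'D, hB'⟩ := aux_exists_finrank_le (V := ↥R) D aa (by omega)
    refine ⟨B'.map R.subtype, Submodule.map_subtype_le R B', by
      rw [Submodule.finrank_map_subtype_eq]; exact hB', ?_⟩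
    intro hsmem
    rw [Submodule.mem_map] at hsmem
    obtain ⟨x, hxB, hxs⟩ := hsmem
    have hxC : x ∈ C := by
      rw [hCdef, Submodule.mem_comap, hxs]
      exact Submodule.mem_span_singleton_self s
    have hx0 : x ∈ C ⊓ D := ⟨hxC, hB'D hxB⟩
    rw [disjoint_iff.mp hD.disjoint] at hx0
    rw [Submodule.mem_bot] at hx0
    rw [hx0] at hxs
    exact hs (by simpa using hxs.symm)
  · obtain ⟨B, hBR, hB⟩ := aux_exists_finrank_le R aa (by omega)
    exact ⟨B, hBR, hB, fun hsm => hsR (hBR hsm)⟩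

lemma aux_lift (T : V →ₗ[ℂ] V) (B : Submodule ℂ V) (hB : B ≤ LinearMap.range T)
    (aa : ℕ) (hBa : finrank ℂ B ≤ aa) (haV : aa ≤ finrank ℂ V) :
    ∃ U : Submodule ℂ V, finrank ℂ U = aa ∧ B ≤ U.map T := by
  classical
  set bb := Module.finBasis ℂ B with hbb
  have hv : ∀ j, ∃ u : V, T u = (bb j : V) := fun j => hB (bb j).2
  choose u hu using hv
  set U0 := Submodule.span ℂ (Set.range u) with hU0def
  have hBspan : Submodule.span ℂ (Set.range fun j => (bb j : V)) = B := by
    have h1 : (Set.range fun j => (bb j : V)) = B.subtype '' Set.range bb := by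
      ext x; simp
    rw [h1, ← Submodule.map_span, bb.span_eq, Submodule.map_subtype_top]
  have hmap : B ≤ U0.map T := by
    show B ≤ (Submodule.span ℂ (Set.range u)).map T
    rw [Submodule.map_span]
    refine le_trans (le_of_eq hBspan.symm) (Submodule.span_mono ?_)
    rintro x ⟨j, rfl⟩
    exact ⟨u j, ⟨j, rfl⟩, hu j⟩
  have hU0 : finrank ℂ U0 ≤ finrank ℂ B := by
    refine (finrank_span_le_card _).trans ?_
    have := Fintype.card_range_le u
    rw [Set.toFinset_card]
    simpa using this
  obtain ⟨U, hle, hU⟩ := aux_extend U0 aa (le_trans hU0 hBa) haV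
  exact ⟨U, hU, le_trans hmap (Submodule.map_mono hle)⟩

end Aux

/-- If an invertible block matrix `g = (g_{ij})` on `V ⊗ E ≅ V^q` maps every
subspace of the form `U₁ ⊗ ℂf₁ ⊕ ⋯ ⊕ U_q ⊗ ℂf_q` (with `dim Uᵢ = a`,
`0 < a < dim V`) to a subspace of the same form, then `g` is a monomial matrix:
there is a permutation `σ` with `g_{ij} = 0` unless `i = σ(j)`, and each
`g_{σ(j) j}` invertible. -/
theorem stmt_5 (V : Type) [AddCommGroup V] [Module ℂ V] [FiniteDimensional ℂ V]
    (n : ℕ) (hn : finrank ℂ V = n) (a : ℕ) (ha : 0 < a) (han : a < n)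
    (q : ℕ) (hq : 0 < q) (g : Fin q → Fin q → (V →ₗ[ℂ] V))
    (hbij : Function.Bijective (blockMap g))
    (hstab : ∀ U : Fin q → Submodule ℂ V, (∀ i, finrank ℂ (U i) = a) →
      ∃ W : Fin q → Submodule ℂ V, (∀ i, finrank ℂ (W i) = a) ∧
        (Submodule.pi Set.univ U).map (blockMap g) = Submodule.pi Set.univ W) :
    ∃ σ : Equiv.Perm (Fin q),
      (∀ i j, i ≠ σ j → g i j = 0) ∧ (∀ j, Function.Bijective (g (σ j) j)) := by
  classical
  obtain ⟨hinj, hsurj⟩ := hbij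
  have han' : a ≤ finrank ℂ V := by omega
  have han1 : a + 1 ≤ finrank ℂ V := by omega
  have happly : ∀ (u : Fin q → V) i, blockMap g u i = ∑ j, g i j (u j) := by
    intro u i
    simp [blockMap]
  have hsingle : ∀ (j : Fin q) (v : V) (i : Fin q),
      blockMap g (Pi.single j v) i = g i j v := by
    intro j v i
    rw [happly, Finset.sum_eq_single j]
    · simp
    · intro m _ hm; simp [Pi.single_eq_of_ne hm]
    · simp
  -- projection of a product
  have hproj : ∀ (W : Fin q → Submodule ℂ V) (i : Fin q),
      (Submodule.pi Set.univ W).map (LinearMap.proj i) = W i := by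
    intro W i
    apply le_antisymm
    · rintro x hx
      rw [Submodule.mem_map] at hx
      obtain ⟨y, hy, rfl⟩ := hx
      exact (Submodule.mem_pi.mp hy) i (Set.mem_univ i)
    · intro w hw
      refine ⟨Pi.single i w, Submodule.mem_pi.mpr (fun m _ => ?_), by simp⟩
      rcases eq_or_ne m i with rfl | hmi
      · simpa using hw
      · simp [Pi.single_eq_of_ne hmi]
  -- image of a product under blockMap, projected to coordinate i
  have himage : ∀ (U : Fin q → Submodule ℂ V) (i : Fin q),
      ((Submodule.pi Set.univ U).map (blockMap g)).map (LinearMap.proj i)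
        = ⨆ j, (U j).map (g i j) := by
    intro U i
    apply le_antisymm
    · intro x hx
      rw [Submodule.mem_map] at hx
      obtain ⟨y, hy, rfl⟩ := hx
      rw [Submodule.mem_map] at hy
      obtain ⟨u, hu, rfl⟩ := hy
      have hx' : (LinearMap.proj i : (Fin q → V) →ₗ[ℂ] V) (blockMap g u)
          = ∑ j, g i j (u j) := happly u i
      rw [hx']
      exact Submodule.sum_mem _ fun j _ => Submodule.mem_iSup_of_mem j
        ⟨u j, Submodule.mem_pi.mp hu j (Set.mem_univ j), rfl⟩
    · apply iSup_le
      intro j x hx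
      rw [Submodule.mem_map] at hx
      obtain ⟨u, hu, rfl⟩ := hx
      refine ⟨blockMap g (Pi.single j u), ⟨Pi.single j u,
        Submodule.mem_pi.mpr fun m _ => ?_, rfl⟩, hsingle j u i⟩
      rcases eq_or_ne m j with rfl | hmj
      · simpa using hu
      · simp [Pi.single_eq_of_ne hmj]
  -- the key consequence of hstab
  have hstar : ∀ (U : Fin q → Submodule ℂ V), (∀ m, finrank ℂ (U m) = a) →
      ∀ i, finrank ℂ ↥(⨆ j, (U j).map (g i j)) = a := by
    intro U hU i
    obtain ⟨W, hWd, hWeq⟩ := hstab U hU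
    rw [← himage U i, hWeq, hproj W i]
    exact hWd i
  -- rows span everything (surjectivity)
  have hrow : ∀ i, (⨆ j, LinearMap.range (g i j)) = ⊤ := by
    intro i
    rw [eq_top_iff]
    intro v _
    obtain ⟨u, hu⟩ := hsurj (Pi.single i v)
    have hv : v = ∑ j, g i j (u j) := by
      rw [← happly u i, hu, Pi.single_eq_same]
    rw [hv]
    exact Submodule.sum_mem _ fun j _ => Submodule.mem_iSup_of_mem j ⟨u j, rfl⟩
  -- row lemma: no row has two nonzero entries
  have hrowlem : ∀ i k k', k ≠ k' → g i k ≠ 0 → g i k' ≠ 0 → False := by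
    intro i k k' hkk' hk hk'
    by_cases hcase : ∀ j, finrank ℂ (LinearMap.range (g i j)) ≤ a
    · have hUex : ∀ j, ∃ U : Submodule ℂ V, finrank ℂ U = a ∧
          LinearMap.range (g i j) ≤ U.map (g i j) :=
        fun j => aux_lift (g i j) _ le_rfl a (hcase j) han'
      choose U hUa hUle using hUex
      have hsup : (⨆ j, (U j).map (g i j)) = ⊤ := by
        rw [eq_top_iff, ← hrow i]
        exact iSup_mono hUle
      have hst := hstar U hUa i
      rw [hsup, finrank_top] at hst
      omega
    · push_neg at hcase
      obtain ⟨m, hm⟩ := hcase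
      obtain ⟨m', hm'ne, hm'⟩ : ∃ m', m' ≠ m ∧ g i m' ≠ 0 := by
        rcases eq_or_ne m k with rfl | h
        · exact ⟨k', fun hh => hkk' hh.symm, hk'⟩
        · exact ⟨k, fun hh => h hh.symm, hk⟩
      obtain ⟨w, hw⟩ : ∃ w, g i m' w ≠ 0 := by
        by_contra hco
        push_neg at hco
        exact hm' (LinearMap.ext fun x => by simpa using hco x)
      obtain ⟨B, hBR, hBa, hsB⟩ := aux_avoid (LinearMap.range (g i m))
        (g i m' w) hw a (by omega)
      obtain ⟨Um, hUma, hUmB⟩ := aux_lift (g i m) B hBR a (le_of_eq hBa) han'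
      obtain ⟨Um', hUm'a, hUm's⟩ := aux_lift (g i m')
        (Submodule.span ℂ {g i m' w})
        (by rw [Submodule.span_le, Set.singleton_subset_iff]; exact ⟨w, rfl⟩)
        a (by rw [finrank_span_singleton hw]; omega) han'
      obtain ⟨F, hF⟩ := aux_exists_finrank a han'
      set U : Fin q → Submodule ℂ V :=
        fun j => if j = m then Um else if j = m' then Um' else F with hUdef
      have hUm : U m = Um := by simp [hUdef]
      have hUm' : U m' = Um' := by simp [hUdef, hm'ne]
      have hUa : ∀ j, finrank ℂ (U j) = a := by
        intro j
        by_cases h1 : j = m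
        · subst h1; rw [hUm]; exact hUma
        · by_cases h2 : j = m'
          · subst h2; rw [hUm']; exact hUm'a
          · have hUj : U j = F := by simp [hUdef, h1, h2]
            rw [hUj]; exact hF
      have h1 : B ≤ ⨆ j, (U j).map (g i j) := by
        refine le_trans ?_ (le_iSup (fun j => (U j).map (g i j)) m)
        rw [hUm]; exact hUmB
      have h2 : Submodule.span ℂ {g i m' w} ≤ ⨆ j, (U j).map (g i j) := by
        refine le_trans ?_ (le_iSup (fun j => (U j).map (g i j)) m')
        rw [hUm']; exact hUm's
      have hinf : B ⊓ Submodule.span ℂ {g i m' w} = ⊥ := by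
        rw [eq_bot_iff]
        rintro x hx
        obtain ⟨hxB, hxs⟩ := Submodule.mem_inf.mp hx
        obtain ⟨c, rfl⟩ := Submodule.mem_span_singleton.mp hxs
        rcases eq_or_ne c 0 with rfl | hc
        · simp
        · exact absurd (by
            simpa [smul_smul, inv_mul_cancel₀ hc] using B.smul_mem c⁻¹ hxB) hsB
      have hdim : finrank ℂ ↥(B ⊔ Submodule.span ℂ {g i m' w}) = a + 1 := by
        have hkey := Submodule.finrank_sup_add_finrank_inf_eq B
          (Submodule.span ℂ {g i m' w})
        rw [hinf, finrank_bot, finrank_span_singleton hw, hBa] at hkey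
        omega
      have hle := Submodule.finrank_mono (sup_le h1 h2)
      rw [hdim, hstar U hUa i] at hle
      omega
  -- every column has a nonzero entry
  have hnt : Nontrivial V := by
    have : 0 < finrank ℂ V := by omega
    exact finrank_pos_iff.mp this
  have hcol : ∀ j, ∃ i, g i j ≠ 0 := by
    intro j
    by_contra hco
    push_neg at hco
    obtain ⟨v, hv⟩ := exists_ne (0 : V)
    have h0 : blockMap g (Pi.single j v) = blockMap g 0 := by
      funext i
      rw [hsingle j v i, hco i]
      simp
    have := congrFun (hinj h0) j
    rw [Pi.single_eq_same] at this
    exact hv (by simpa using this)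
  choose τ hτ using hcol
  have hτbij : Function.Bijective τ :=
    Finite.injective_iff_bijective.mp (by
      intro j j' hjj'
      by_contra hne
      exact hrowlem (τ j) j j' hne (hτ j) (by rw [hjj']; exact hτ j'))
  have hzero : ∀ i j, i ≠ τ j → g i j = 0 := by
    intro i j hij
    by_contra hgij
    obtain ⟨j', hj'⟩ := hτbij.2 i
    rcases eq_or_ne j' j with rfl | hne
    · exact hij hj'.symm
    · exact hrowlem i j j' (fun hh => hne hh.symm) hgij (hj' ▸ hτ j')
  refine ⟨Equiv.ofBijective τ hτbij, ?_, ?_⟩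
  · intro i j hij
    exact hzero i j hij
  · intro j
    have hinj' : Function.Injective (g (τ j) j) := by
      intro x y hxy
      have h0 : blockMap g (Pi.single j x) = blockMap g (Pi.single j y) := by
        funext i
        rw [hsingle j x i, hsingle j y i]
        rcases eq_or_ne i (τ j) with rfl | hiτ
        · exact hxy
        · rw [hzero i j hiτ]; simp
      have := congrFun (hinj h0) j
      simpa using this
    exact ⟨hinj', LinearMap.injective_iff_surjective.mp hinj'⟩
end

section
/- Let x₁, …, x_q and y₁, …, y_q be indeterminates. For 0 ≤ k ≤ q, let c_k be the coefficient of u^k v^{q−k} in the product ∏_{i=1}^q (xᵢ u + yᵢ v), viewed as a polynomial in u, v with coefficients in ℂ[x₁,y₁,…,x_q,y_q]. Then the subalgebra of ℂ[x₁,y₁,…,x_q,y_q] consisting of polynomials invariant under the symmetric group 𝔖_q acting by simultaneously permuting the pairs (xᵢ, yᵢ), and multihomogeneous of the same degree p in each pair (xᵢ,yᵢ), is, as p ranges over ℕ, the polynomial algebra freely generated by c₀, c₁, …, c_q. -/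
open MvPolynomial

/-- `c_k`: the coefficient of `u^k v^{q-k}` in `∏ᵢ (xᵢ u + yᵢ v)`, as a
polynomial in the variables `xᵢ = X (i, 0)`, `yᵢ = X (i, 1)`:
`c_k = Σ_{S ⊆ {1,…,q}, |S| = k} ∏_{i ∈ S} xᵢ ∏_{i ∉ S} yᵢ`. -/
noncomputable def bihomC (q : ℕ) (k : Fin (q + 1)) : MvPolynomial (Fin q × Fin 2) ℂ :=
  ∑ S ∈ Finset.univ.powersetCard (k : ℕ),
    (∏ i ∈ S, X (i, (0 : Fin 2))) * ∏ i ∈ Sᶜ, X (i, (1 : Fin 2))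

/-- Invariance under the symmetric group `𝔖_q` permuting the pairs `(xᵢ, yᵢ)`. -/
def SymInvariant (q : ℕ) (P : MvPolynomial (Fin q × Fin 2) ℂ) : Prop :=
  ∀ σ : Equiv.Perm (Fin q), rename (Prod.map σ id) P = P

/-- `P` is multihomogeneous of degree `p`: homogeneous of degree `p` in each
pair of variables `(xᵢ, yᵢ)` separately. -/
def MultiHomog (q p : ℕ) (P : MvPolynomial (Fin q × Fin 2) ℂ) : Prop :=
  ∀ m ∈ P.support, ∀ i : Fin q, m (i, 0) + m (i, 1) = p

open Finset


variable {R σ ι S : Type*} [CommSemiring R]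

lemma aeval_monomial_fintype [Fintype σ] [CommSemiring S] [Algebra R S]
    (g : σ → S) (t : σ →₀ ℕ) (a : R) :
    aeval g (monomial t a) = algebraMap R S a * ∏ i, g i ^ t i := by
  rw [aeval_monomial, Finsupp.prod_fintype]
  intro i; exact pow_zero _

lemma monomial_eq_prod_fintype [Fintype σ] (t : σ →₀ ℕ) (a : R) :
    (monomial t a : MvPolynomial σ R) = C a * ∏ i, (X i : MvPolynomial σ R) ^ t i := by
  rw [monomial_eq, Finsupp.prod_fintype]
  intro i; exact pow_zero _

lemma prod_X_eq_monomial (s : Finset ι) (g : ι → σ) :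
    (∏ i ∈ s, (X (g i) : MvPolynomial σ R)) =
      monomial (∑ i ∈ s, Finsupp.single (g i) 1) 1 := by
  induction s using Finset.cons_induction with
  | empty => simp [monomial_zero']
  | cons a s ha ih =>
      rw [Finset.prod_cons, Finset.sum_cons, ih, X, monomial_mul, one_mul]

/-- exponent of the monomial attached to a subset `S` -/
noncomputable def mS (q : ℕ) (S : Finset (Fin q)) : (Fin q × Fin 2) →₀ ℕ :=
  (∑ i ∈ S, Finsupp.single (i, 0) 1) + ∑ i ∈ Sᶜ, Finsupp.single (i, 1) 1

lemma mS_apply_zero (q : ℕ) (S : Finset (Fin q)) (i : Fin q) :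
    mS q S (i, 0) = if i ∈ S then 1 else 0 := by
  simp [mS, Finset.sum_apply', Finsupp.single_apply, Prod.ext_iff]

lemma mS_apply_one (q : ℕ) (S : Finset (Fin q)) (i : Fin q) :
    mS q S (i, 1) = if i ∈ S then 0 else 1 := by
  simp [mS, Finset.sum_apply', Finsupp.single_apply, Prod.ext_iff, Finset.mem_compl]

lemma bihomC_eq (q : ℕ) (k : Fin (q + 1)) :
    bihomC q k = ∑ S ∈ Finset.univ.powersetCard (k : ℕ), monomial (mS q S) 1 := by
  unfold bihomC
  refine Finset.sum_congr rfl fun S _ => ?_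
  rw [prod_X_eq_monomial S (fun i => (i, (0 : Fin 2))),
    prod_X_eq_monomial Sᶜ (fun i => (i, (1 : Fin 2))), monomial_mul, mul_one]
  rfl

lemma multiHomog_bihomC (q : ℕ) (k : Fin (q + 1)) : MultiHomog q 1 (bihomC q k) := by
  intro m hm i
  rw [bihomC_eq] at hm
  have := MvPolynomial.support_sum hm
  simp only [Finset.mem_biUnion] at this
  obtain ⟨S, -, hmS⟩ := this
  have hm' : m = mS q S := by
    have := support_monomial_subset hmS
    simpa using this
  subst hm'
  rw [mS_apply_zero, mS_apply_one]
  by_cases h : i ∈ S <;> simp [h]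

lemma multiHomog_isHomogeneous {q d : ℕ} {P : MvPolynomial (Fin q × Fin 2) ℂ}
    (h : MultiHomog q d P) : P.IsHomogeneous (d * q) := by
  intro m hm
  have hm' : m ∈ P.support := by rwa [mem_support_iff]
  have : ∀ i : Fin q, m (i, 0) + m (i, 1) = d := h m hm' 
  calc (Finsupp.weight 1) m = ∑ v : Fin q × Fin 2, m v := by
        rw [Finsupp.weight_apply, Finsupp.sum_fintype]
        · simp
        · intro v; simp
    _ = ∑ i : Fin q, (m (i, 0) + m (i, 1)) := by
        rw [Fintype.sum_prod_type]
        refine Finset.sum_congr rfl fun i _ => ?_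
        rw [Fin.sum_univ_two]
    _ = d * q := by simp [this, mul_comm]

lemma image_perm_compl {q : ℕ} (σ : Equiv.Perm (Fin q)) (S : Finset (Fin q)) :
    (S.image σ)ᶜ = Sᶜ.image σ := by
  ext a
  simp only [Finset.mem_compl, Finset.mem_image]
  constructor
  · intro h
    refine ⟨σ.symm a, fun hc => h ⟨σ.symm a, hc, by simp⟩, by simp⟩
  · rintro ⟨b, hb, rfl⟩ ⟨c, hc, hcb⟩
    exact hb (by rwa [← σ.injective hcb])

lemma symInvariant_bihomC (q : ℕ) (k : Fin (q + 1)) : SymInvariant q (bihomC q k) := by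
  intro σ
  unfold bihomC
  rw [map_sum]
  refine Finset.sum_bij' (fun S _ => S.image σ) (fun S _ => S.image σ.symm) ?_ ?_ ?_ ?_ ?_
  · intro S hS
    rw [Finset.mem_powersetCard] at hS ⊢
    exact ⟨Finset.subset_univ _, by rw [Finset.card_image_of_injective _ σ.injective, hS.2]⟩
  · intro S hS
    rw [Finset.mem_powersetCard] at hS ⊢
    exact ⟨Finset.subset_univ _, by rw [Finset.card_image_of_injective _ σ.symm.injective, hS.2]⟩
  · intro S _
    rw [Finset.image_image]
    simp
  · intro S _
    rw [Finset.image_image]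
    simp
  · intro S _
    rw [map_mul, map_prod, map_prod]
    simp_rw [rename_X]
    rw [Finset.prod_image (fun a _ b _ h => σ.injective h) (f := fun i => (X (i, (0:Fin 2)) : MvPolynomial (Fin q × Fin 2) ℂ)),
      image_perm_compl,
      Finset.prod_image (fun a _ b _ h => σ.injective h) (f := fun i => (X (i, (1:Fin 2)) : MvPolynomial (Fin q × Fin 2) ℂ))]
    rfl

lemma MultiHomog.mul {q d e : ℕ} {P Q : MvPolynomial (Fin q × Fin 2) ℂ}
    (hP : MultiHomog q d P) (hQ : MultiHomog q e Q) : MultiHomog q (d + e) (P * Q) := by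
  intro m hm i
  have h := MvPolynomial.support_mul P Q hm
  rw [Finset.mem_add] at h
  obtain ⟨m1, hm1, m2, hm2, rfl⟩ := h
  simp only [Finsupp.add_apply]
  have := hP m1 hm1 i
  have := hQ m2 hm2 i
  omega

lemma MultiHomog.one {q : ℕ} : MultiHomog q 0 (1 : MvPolynomial (Fin q × Fin 2) ℂ) := by
  intro m hm i
  have : m = 0 := by
    have := MvPolynomial.support_monomial_subset (s := 0) (a := (1:ℂ)) (by simpa using hm)
    simpa using this
  simp [this]

lemma MultiHomog.pow {q d : ℕ} {P : MvPolynomial (Fin q × Fin 2) ℂ}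
    (hP : MultiHomog q d P) (n : ℕ) : MultiHomog q (d * n) (P ^ n) := by
  induction n with
  | zero => simpa using MultiHomog.one
  | succ n ih =>
      have h2 := ih.mul hP
      rw [pow_succ]
      have : d * n + d = d * (n+1) := by ring
      rwa [this] at h2

lemma MultiHomog.sum {q d : ℕ} {ι : Type*} (s : Finset ι)
    (f : ι → MvPolynomial (Fin q × Fin 2) ℂ) (h : ∀ a ∈ s, MultiHomog q d (f a)) :
    MultiHomog q d (∑ a ∈ s, f a) := by
  intro m hm i
  have := MvPolynomial.support_sum hm
  rw [Finset.mem_biUnion] at this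
  obtain ⟨a, ha, hma⟩ := this
  exact h a ha m hma i

lemma MultiHomog.smul {q d : ℕ} {P : MvPolynomial (Fin q × Fin 2) ℂ} (c : ℂ)
    (hP : MultiHomog q d P) : MultiHomog q d (c • P) := by
  intro m hm i
  exact hP m (Finsupp.support_smul hm) i

/-- dehomogenization: `xᵢ ↦ Xᵢ`, `yᵢ ↦ 1`. -/
noncomputable def DH (q : ℕ) : MvPolynomial (Fin q × Fin 2) ℂ →ₐ[ℂ] MvPolynomial (Fin q) ℂ :=
  aeval (fun v => if v.2 = 0 then X v.1 else 1)

lemma DH_bihomC (q : ℕ) (k : Fin (q + 1)) :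
    DH q (bihomC q k) = esymm (Fin q) ℂ (k : ℕ) := by
  unfold bihomC esymm DH
  rw [map_sum]
  refine Finset.sum_congr rfl fun S _ => ?_
  rw [map_mul, map_prod, map_prod]
  simp only [aeval_X]
  norm_num

/-- projection of an exponent `m` to the `x`-part. -/
noncomputable def projH (q : ℕ) (m : (Fin q × Fin 2) →₀ ℕ) : Fin q →₀ ℕ :=
  Finsupp.equivFunOnFinite.symm (fun i => m (i, 0))

@[simp] lemma projH_apply (q : ℕ) (m : (Fin q × Fin 2) →₀ ℕ) (i : Fin q) :
    projH q m i = m (i, 0) := rfl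

lemma DH_monomial (q : ℕ) (m : (Fin q × Fin 2) →₀ ℕ) (a : ℂ) :
    DH q (monomial m a) = monomial (projH q m) a := by
  unfold DH
  rw [aeval_monomial_fintype, monomial_eq_prod_fintype, algebraMap_eq]
  congr 1
  rw [Fintype.prod_prod_type]
  refine Finset.prod_congr rfl fun i _ => ?_
  rw [Fin.prod_univ_two]
  norm_num

lemma proj_inj_multihomog {q d : ℕ} {m m' : (Fin q × Fin 2) →₀ ℕ}
    (hm : ∀ i, m (i, 0) + m (i, 1) = d) (hm' : ∀ i, m' (i, 0) + m' (i, 1) = d)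
    (h : projH q m = projH q m') : m = m' := by
  ext ⟨i, j⟩
  have h0 : m (i, 0) = m' (i, 0) := by
    have := DFunLike.congr_fun h i
    simpa using this
  have h1 : m (i, 1) = m' (i, 1) := by
    have := hm i; have := hm' i; omega
  fin_cases j
  · exact h0
  · exact h1

lemma coeff_DH_of_mem {q d : ℕ} {P : MvPolynomial (Fin q × Fin 2) ℂ}
    (hP : MultiHomog q d P) {m : (Fin q × Fin 2) →₀ ℕ} (hmd : ∀ i, m (i, 0) + m (i, 1) = d) :
    coeff (projH q m) (DH q P) = coeff m P := by
  conv_lhs => rw [P.as_sum, map_sum]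
  simp_rw [DH_monomial]
  rw [coeff_sum]
  simp_rw [coeff_monomial]
  by_cases hm : m ∈ P.support
  · rw [Finset.sum_eq_single_of_mem m hm]
    · simp
    · intro m' hm' hne
      rw [if_neg]
      intro he
      exact hne (proj_inj_multihomog (hP m' hm') hmd he)
  · rw [Finset.sum_eq_zero]
    · rw [notMem_support_iff] at hm
      rw [hm]
    · intro m' hm'
      rw [if_neg]
      intro he
      have := proj_inj_multihomog (hP m' hm') hmd he
      rw [this] at hm'
      exact hm hm'

lemma lex_lt_coord_le {q : ℕ} (hq : 0 < q) {a b : Lex (Fin q →₀ ℕ)} (h : a < b) :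
    ofLex a ⟨0, hq⟩ ≤ ofLex b ⟨0, hq⟩ := by
  obtain ⟨j, hj, hlt⟩ := Finsupp.lex_def.mp h
  rcases eq_or_lt_of_le (show (⟨0, hq⟩ : Fin q) ≤ j by rw [Fin.le_def]; exact Nat.zero_le _) with rfl | hjlt
  · exact le_of_lt hlt
  · exact le_of_eq (hj _ hjlt)

lemma esymmAlgHomMonomial_smul {q : ℕ} (t : Fin q →₀ ℕ) (r : ℂ) :
    esymmAlgHomMonomial (Fin q) t r = r • esymmAlgHomMonomial (Fin q) t (1 : ℂ) := by
  unfold esymmAlgHomMonomial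
  have : (monomial t r : MvPolynomial (Fin q) ℂ) = r • monomial t 1 := by
    rw [smul_monomial, smul_eq_mul, mul_one]
  rw [this, map_smul]
  rfl

open AddMonoidAlgebra in
lemma symm_mem_span_esymm {q d : ℕ} (hq : 0 < q) (p : MvPolynomial (Fin q) ℂ)
    (hsym : p.IsSymmetric)
    (hbd : p ≠ 0 → (ofLex (p.supDegree toLex)) ⟨0, hq⟩ ≤ d) :
    p ∈ Submodule.span ℂ ((fun t : Fin q →₀ ℕ => esymmAlgHomMonomial (Fin q) t (1:ℂ)) ''
      {t | (∑ i, t i) ≤ d}) := by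
  have H : ∀ u : Lex (Fin q →₀ ℕ), ∀ p : MvPolynomial (Fin q) ℂ, p.supDegree toLex = u →
      p.IsSymmetric → (p ≠ 0 → (ofLex (p.supDegree toLex)) ⟨0, hq⟩ ≤ d) →
      p ∈ Submodule.span ℂ ((fun t : Fin q →₀ ℕ => esymmAlgHomMonomial (Fin q) t (1:ℂ)) ''
        {t | (∑ i, t i) ≤ d}) := by
    intro u
    induction u using WellFoundedLT.induction with
    | _ u ih =>
      intro p hu hsym hbd
      obtain rfl | h0 := eq_or_ne p 0
      · exact Submodule.zero_mem _
      subst hu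
      set t := Finsupp.equivFunOnFinite.symm (Fin.invAccumulate q q <| ↑(ofLex <| p.supDegree toLex)) with ht
      have hacc : Fin.accumulate q q ↑t = ↑(ofLex <| p.supDegree toLex) :=
        Fin.accumulate_invAccumulate le_rfl hsym.antitone_supDegree
      have hd : (esymmAlgHomMonomial _ t <| p.leadingCoeff toLex).supDegree toLex
          = p.supDegree toLex := by
        rw [← ofLex_inj, DFunLike.ext'_iff, supDegree_esymmAlgHomMonomial _ _ le_rfl]
        · exact hacc
        · rwa [Ne, leadingCoeff_eq_zero toLex.injective]
      have htsum : (∑ i, t i) ≤ d := by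
        have h1 : Fin.accumulate q q (↑t) ⟨0, hq⟩ = ∑ i, t i := by
          rw [Fin.accumulate_apply]
          refine Finset.sum_congr ?_ fun i _ => rfl
          refine Finset.filter_true_of_mem fun i _ => Nat.zero_le _
        rw [hacc] at h1
        rw [← h1]
        exact hbd h0
      have hmem : esymmAlgHomMonomial (Fin q) t (p.leadingCoeff toLex) ∈
          Submodule.span ℂ ((fun t : Fin q →₀ ℕ => esymmAlgHomMonomial (Fin q) t (1:ℂ)) ''
            {t | (∑ i, t i) ≤ d}) := by
        rw [esymmAlgHomMonomial_smul]
        exact Submodule.smul_mem _ _ (Submodule.subset_span ⟨t, htsum, rfl⟩)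
      obtain he | hne := eq_or_ne p (esymmAlgHomMonomial _ t <| p.leadingCoeff toLex)
      · rw [he]; exact hmem
      have hlt := (supDegree_sub_lt_of_leadingCoeff_eq toLex.injective hd.symm ?_).resolve_right hne
      · have hsub := ih _ hlt (p - esymmAlgHomMonomial _ t (p.leadingCoeff toLex)) rfl
          (hsym.sub (isSymmetric_esymmAlgHomMonomial _ _)) ?_
        · have := Submodule.add_mem _ hsub hmem
          rwa [sub_add_cancel] at this
        · intro _
          exact le_trans (lex_lt_coord_le hq hlt) (hbd h0)
      · rw [leadingCoeff_esymmAlgHomMonomial t le_rfl]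
  exact H _ p rfl hsym hbd

lemma DH_injOn_multihomog {q d : ℕ} {P Q : MvPolynomial (Fin q × Fin 2) ℂ}
    (hP : MultiHomog q d P) (hQ : MultiHomog q d Q) (h : DH q P = DH q Q) : P = Q := by
  ext m
  by_cases hm : m ∈ P.support
  · have hmd := hP m hm
    rw [← coeff_DH_of_mem hP hmd, h, coeff_DH_of_mem hQ hmd]
  · by_cases hm' : m ∈ Q.support
    · have hmd := hQ m hm'
      rw [← coeff_DH_of_mem hP hmd, h, coeff_DH_of_mem hQ hmd]
    · rw [notMem_support_iff.mp hm, notMem_support_iff.mp hm']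

lemma MultiHomog.add {q d : ℕ} {P Q : MvPolynomial (Fin q × Fin 2) ℂ}
    (hP : MultiHomog q d P) (hQ : MultiHomog q d Q) : MultiHomog q d (P + Q) := by
  intro m hm i
  rcases Finset.mem_union.mp (MvPolynomial.support_add hm) with h | h
  · exact hP m h i
  · exact hQ m h i

lemma MultiHomog.zero {q d : ℕ} : MultiHomog q d (0 : MvPolynomial (Fin q × Fin 2) ℂ) := by
  intro m hm
  simp at hm

lemma MultiHomog.prod {q : ℕ} {ι : Type*} (s : Finset ι) (n : ι → ℕ)
    (f : ι → MvPolynomial (Fin q × Fin 2) ℂ) (h : ∀ a ∈ s, MultiHomog q (n a) (f a)) :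
    MultiHomog q (∑ a ∈ s, n a) (∏ a ∈ s, f a) := by
  induction s using Finset.cons_induction with
  | empty => simpa using MultiHomog.one
  | cons a s ha ih =>
      rw [Finset.prod_cons, Finset.sum_cons]
      exact (h a (Finset.mem_cons_self a s)).mul
        (ih fun b hb => h b (Finset.mem_cons.mpr (Or.inr hb)))

/-- rehomogenization of the `esymm`-monomial indexed by `t`, multihomogeneous of degree `d`. -/
noncomputable def Cmon (q d : ℕ) (t : Fin q →₀ ℕ) : MvPolynomial (Fin q × Fin 2) ℂ :=
  (∏ i : Fin q, (bihomC q i.succ) ^ t i) * (bihomC q 0) ^ (d - ∑ i, t i)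

lemma Cmon_mem_adjoin (q d : ℕ) (t : Fin q →₀ ℕ) :
    Cmon q d t ∈ Algebra.adjoin ℂ (Set.range (bihomC q)) := by
  refine Subalgebra.mul_mem _ (Subalgebra.prod_mem _ fun i _ => Subalgebra.pow_mem _ ?_ _)
    (Subalgebra.pow_mem _ ?_ _)
  · exact Algebra.subset_adjoin ⟨i.succ, rfl⟩
  · exact Algebra.subset_adjoin ⟨0, rfl⟩

lemma multiHomog_Cmon {q d : ℕ} {t : Fin q →₀ ℕ} (h : (∑ i, t i) ≤ d) :
    MultiHomog q d (Cmon q d t) := by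
  have h1 : MultiHomog q (∑ i, 1 * t i) (∏ i : Fin q, (bihomC q i.succ) ^ t i) :=
    MultiHomog.prod _ _ _ fun i _ => (multiHomog_bihomC q i.succ).pow (t i)
  have h2 := (multiHomog_bihomC q 0).pow (d - ∑ i, t i)
  have := h1.mul h2
  have e : (∑ i, 1 * t i) + 1 * (d - ∑ i, t i) = d := by simp only [one_mul]; omega
  rwa [e] at this

lemma DH_Cmon (q d : ℕ) (t : Fin q →₀ ℕ) :
    DH q (Cmon q d t) = esymmAlgHomMonomial (Fin q) t (1 : ℂ) := by
  unfold Cmon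
  rw [map_mul, map_prod, map_pow, DH_bihomC]
  simp_rw [map_pow, DH_bihomC]
  rw [show ((0 : Fin (q+1)) : ℕ) = 0 from rfl, esymm_zero, one_pow, mul_one]
  rw [esymmAlgHomMonomial, esymmAlgHom_apply, aeval_monomial_fintype, map_one, one_mul]
  refine Finset.prod_congr rfl fun i _ => ?_
  rw [Fin.val_succ]

lemma DH_rename {q : ℕ} (σ : Equiv.Perm (Fin q)) (P : MvPolynomial (Fin q × Fin 2) ℂ) :
    DH q (rename (Prod.map σ id) P) = rename σ (DH q P) := by
  rw [DH, aeval_rename, comp_aeval_apply]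
  have hfun : ((fun v : Fin q × Fin 2 => if v.2 = 0 then (X v.1 : MvPolynomial (Fin q) ℂ) else 1)
      ∘ Prod.map σ id) = fun v : Fin q × Fin 2 =>
        rename σ (if v.2 = 0 then (X v.1 : MvPolynomial (Fin q) ℂ) else 1) := by
    funext v
    obtain ⟨i, j⟩ := v
    by_cases hj : j = 0 <;> simp [hj, Prod.map]
  rw [hfun]

lemma support_DH {q d : ℕ} {P : MvPolynomial (Fin q × Fin 2) ℂ} (hP : MultiHomog q d P)
    {s : Fin q →₀ ℕ} (hs : s ∈ (DH q P).support) : ∀ i, s i ≤ d := by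
  have hrw : DH q P = ∑ m ∈ P.support, monomial (projH q m) (coeff m P) := by
    conv_lhs => rw [P.as_sum]
    rw [map_sum]
    simp_rw [DH_monomial]
  rw [hrw] at hs
  obtain ⟨m, hm, hsm⟩ := Finset.mem_biUnion.mp (MvPolynomial.support_sum hs)
  have hsub := support_monomial_subset hsm
  have : s = projH q m := Finset.mem_singleton.mp hsub
  intro i
  have := hP m hm i
  rw [‹s = projH q m›, projH_apply]
  omega

noncomputable def goodSub (q d : ℕ) : Submodule ℂ (MvPolynomial (Fin q × Fin 2) ℂ) where
  carrier := {Q | MultiHomog q d Q ∧ Q ∈ Algebra.adjoin ℂ (Set.range (bihomC q))}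
  add_mem' := fun ha hb => ⟨ha.1.add hb.1, Subalgebra.add_mem _ ha.2 hb.2⟩
  zero_mem' := ⟨MultiHomog.zero, Subalgebra.zero_mem _⟩
  smul_mem' := fun c x hx => ⟨hx.1.smul c, Subalgebra.smul_mem _ hx.2 c⟩

lemma part3 {q : ℕ} (hq : 0 < q) (d : ℕ) (P : MvPolynomial (Fin q × Fin 2) ℂ)
    (hinv : SymInvariant q P) (hmh : MultiHomog q d P) :
    P ∈ Algebra.adjoin ℂ (Set.range (bihomC q)) := by
  set f := DH q P with hf
  have hsym : f.IsSymmetric := by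
    intro σ
    rw [hf, ← DH_rename σ P, hinv σ]
  have hbd : f ≠ 0 → (ofLex (f.supDegree toLex)) ⟨0, hq⟩ ≤ d := by
    intro hne
    obtain ⟨s, hs, hDs⟩ := AddMonoidAlgebra.exists_supDegree_mem_support toLex hne
    have : ofLex (f.supDegree toLex) = s := by rw [hDs]; rfl
    rw [this]
    exact support_DH hmh hs _
  have hspan := symm_mem_span_esymm hq f hsym hbd
  have himg : ((fun t : Fin q →₀ ℕ => esymmAlgHomMonomial (Fin q) t (1:ℂ)) ''
        {t : Fin q →₀ ℕ | (∑ i, t i) ≤ d})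
      = ⇑(DH q) '' ((fun t => Cmon q d t) '' {t : Fin q →₀ ℕ | (∑ i, t i) ≤ d}) := by
    rw [Set.image_image]
    exact Set.image_congr fun t _ => (DH_Cmon q d t).symm
  rw [himg, show ⇑(DH q) = ⇑(DH q).toLinearMap from rfl, ← Submodule.map_span] at hspan
  obtain ⟨Q, hQ, hQf⟩ := Submodule.mem_map.mp hspan
  have hQW : Q ∈ goodSub q d := by
    refine Submodule.span_le.mpr ?_ hQ
    rintro _ ⟨t, ht, rfl⟩
    exact ⟨multiHomog_Cmon ht, Cmon_mem_adjoin q d t⟩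
  have hQP : Q = P := DH_injOn_multihomog hQW.1 hmh (by exact hQf)
  rw [← hQP]
  exact hQW.2

lemma aeval_esymm_succ_inj {q : ℕ} {G : MvPolynomial (Fin q) ℂ}
    (h : aeval (fun j : Fin q => esymm (Fin q) ℂ (j + 1)) G = 0) : G = 0 := by
  have h2 : esymmAlgHom (Fin q) ℂ q G = 0 := by
    ext1
    rw [esymmAlgHom_apply, h]
    rfl
  have := esymmAlgHom_fin_injective ℂ (le_refl q)
  rw [← map_zero (esymmAlgHom (Fin q) ℂ q)] at h2
  exact this h2

/-- substitution `t₀ ↦ 1`, `t_{j+1} ↦ X j`. -/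
noncomputable def subOne (q : ℕ) : MvPolynomial (Fin (q + 1)) ℂ →ₐ[ℂ] MvPolynomial (Fin q) ℂ :=
  aeval (fun k : Fin (q + 1) => Fin.cases (1 : MvPolynomial (Fin q) ℂ) X k)

lemma aeval_esymm_eq_subOne (q : ℕ) (G : MvPolynomial (Fin (q + 1)) ℂ) :
    aeval (fun k : Fin (q + 1) => esymm (Fin q) ℂ (k : ℕ)) G
      = aeval (fun j : Fin q => esymm (Fin q) ℂ (j + 1)) (subOne q G) := by
  rw [subOne, comp_aeval_apply]
  have hfun : (fun i : Fin (q + 1) =>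
      aeval (fun j : Fin q => esymm (Fin q) ℂ (j + 1)) (Fin.cases (1 : MvPolynomial (Fin q) ℂ) X i))
      = fun k : Fin (q + 1) => esymm (Fin q) ℂ (k : ℕ) := by
    funext k
    induction k using Fin.cases with
    | zero => simp [esymm_zero]
    | succ j => simp
  rw [hfun]

noncomputable def tailF {q : ℕ} (α : Fin (q + 1) →₀ ℕ) : Fin q →₀ ℕ :=
  Finsupp.equivFunOnFinite.symm (fun j => α j.succ)

@[simp] lemma tailF_apply {q : ℕ} (α : Fin (q + 1) →₀ ℕ) (j : Fin q) :
    tailF α j = α j.succ := rfl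

lemma subOne_monomial {q : ℕ} (α : Fin (q + 1) →₀ ℕ) (a : ℂ) :
    subOne q (monomial α a) = monomial (tailF α) a := by
  rw [subOne, aeval_monomial_fintype, monomial_eq_prod_fintype, algebraMap_eq]
  congr 1
  rw [Fin.prod_univ_succ]
  simp

lemma sum_eq_of_isHomogeneous {q n : ℕ} {G : MvPolynomial (Fin (q + 1)) ℂ}
    (hG : G.IsHomogeneous n) {α : Fin (q + 1) →₀ ℕ} (hα : α ∈ G.support) :
    ∑ k, α k = n := by
  have := hG (mem_support_iff.mp hα)
  rw [← this, Finsupp.weight_apply, Finsupp.sum_fintype]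
  · simp
  · intro v; simp

lemma tailF_inj_homog {q n : ℕ} {G : MvPolynomial (Fin (q + 1)) ℂ}
    (hG : G.IsHomogeneous n) {α α' : Fin (q + 1) →₀ ℕ}
    (hα : α ∈ G.support) (hα' : α' ∈ G.support) (h : tailF α = tailF α') : α = α' := by
  have hsum := sum_eq_of_isHomogeneous hG hα
  have hsum' := sum_eq_of_isHomogeneous hG hα'
  rw [Fin.sum_univ_succ] at hsum hsum'
  have htail : ∀ j : Fin q, α j.succ = α' j.succ := by
    intro j
    have := DFunLike.congr_fun h j
    simpa using this
  have hzero : α 0 = α' 0 := by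
    have e1 : ∑ j : Fin q, α j.succ = ∑ j : Fin q, α' j.succ :=
      Finset.sum_congr rfl fun j _ => htail j
    omega
  ext k
  induction k using Fin.cases with
  | zero => exact hzero
  | succ j => exact htail j

lemma subOne_inj_homog {q n : ℕ} {G : MvPolynomial (Fin (q + 1)) ℂ}
    (hG : G.IsHomogeneous n) (h : subOne q G = 0) : G = 0 := by
  have hco : ∀ α ∈ G.support, coeff (tailF α) (subOne q G) = coeff α G := by
    intro α hα
    conv_lhs => rw [G.as_sum, map_sum]
    simp_rw [subOne_monomial]
    rw [coeff_sum]
    simp_rw [coeff_monomial]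
    rw [Finset.sum_eq_single_of_mem α hα]
    · simp
    · intro α' hα' hne
      rw [if_neg]
      intro he
      exact hne (tailF_inj_homog hG hα' hα he)
  ext α
  by_cases hα : α ∈ G.support
  · rw [← hco α hα, h]
    simp
  · rw [notMem_support_iff.mp hα]
    simp

lemma isHomogeneous_bihomC (q : ℕ) (k : Fin (q + 1)) : (bihomC q k).IsHomogeneous q := by
  have := multiHomog_isHomogeneous (multiHomog_bihomC q k)
  rwa [one_mul] at this

lemma algIndep_bihomC (q : ℕ) (hq : 0 < q) : AlgebraicIndependent ℂ (bihomC q) := by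
  rw [algebraicIndependent_iff]
  intro F hF
  have key : ∀ n, aeval (bihomC q) (homogeneousComponent n F) = 0 → homogeneousComponent n F = 0 := by
    intro n hFn
    have h1 : aeval (fun k : Fin (q + 1) => esymm (Fin q) ℂ (k : ℕ))
        (homogeneousComponent n F) = 0 := by
      have := congrArg (DH q) hFn
      rw [comp_aeval_apply, map_zero] at this
      have hfun : (fun i : Fin (q + 1) => DH q (bihomC q i))
          = fun k : Fin (q + 1) => esymm (Fin q) ℂ (k : ℕ) := by funext k; exact DH_bihomC q k
      rwa [hfun] at this
    rw [aeval_esymm_eq_subOne] at h1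
    have h2 : subOne q (homogeneousComponent n F) = 0 := aeval_esymm_succ_inj h1
    exact subOne_inj_homog (homogeneousComponent_isHomogeneous n F) h2
  have hsum : ∀ n ∈ Finset.range (F.totalDegree + 1),
      aeval (bihomC q) (homogeneousComponent n F) = 0 := by
    intro n _
    have h0 : (0 : MvPolynomial (Fin q × Fin 2) ℂ)
        = ∑ m ∈ Finset.range (F.totalDegree + 1),
            aeval (bihomC q) (homogeneousComponent m F) := by
      rw [← map_sum, F.sum_homogeneousComponent, hF]
    have h1 := congrArg (homogeneousComponent (q * n)) h0
    rw [map_zero, map_sum] at h1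
    have h2 : ∀ m ∈ Finset.range (F.totalDegree + 1),
        homogeneousComponent (q * n) (aeval (bihomC q) (homogeneousComponent m F))
          = if n = m then aeval (bihomC q) (homogeneousComponent m F) else 0 := by
      intro m _
      have hm : (aeval (bihomC q) (homogeneousComponent m F)).IsHomogeneous (q * m) :=
        (homogeneousComponent_isHomogeneous m F).aeval _ (fun k => isHomogeneous_bihomC q k)
      rw [homogeneousComponent_of_mem hm]
      congr 1
      simp only [eq_iff_iff]
      constructor
      · intro h; exact Nat.eq_of_mul_eq_mul_left hq h
      · intro h; rw [h]
    rw [Finset.sum_congr rfl h2] at h1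
    by_cases hn : n ∈ Finset.range (F.totalDegree + 1)
    · rw [Finset.sum_ite_eq] at h1
      rw [if_pos hn] at h1
      exact h1.symm
    · exact absurd ‹n ∈ Finset.range (F.totalDegree + 1)› hn
  have : F = ∑ n ∈ Finset.range (F.totalDegree + 1), homogeneousComponent n F :=
    (F.sum_homogeneousComponent).symm
  rw [this]
  exact Finset.sum_eq_zero fun n hn => key n (hsum n hn)

/-- The algebra of `𝔖_q`-invariant multihomogeneous polynomials is the polynomial
algebra freely generated by `c₀, …, c_q`: the `c_k` are algebraically independent,
they are invariant and multihomogeneous of degree `1`, and every invariant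
polynomial which is multihomogeneous of some degree `p` is a polynomial in the
`c_k`. -/
theorem stmt_7 (q : ℕ) (hq : 1 ≤ q) :
    AlgebraicIndependent ℂ (bihomC q) ∧
    (∀ k : Fin (q + 1), SymInvariant q (bihomC q k) ∧ MultiHomog q 1 (bihomC q k)) ∧
    (∀ (p : ℕ) (P : MvPolynomial (Fin q × Fin 2) ℂ),
      SymInvariant q P → MultiHomog q p P →
        P ∈ Algebra.adjoin ℂ (Set.range (bihomC q))) := by
  exact ⟨algIndep_bihomC q hq, fun k => ⟨symInvariant_bihomC q k, multiHomog_bihomC q k⟩,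
    fun p P hinv hmh => part3 hq p P hinv hmh⟩
end
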